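/- arXiv:1304.7186 — 3 statements merged into one kernel-verified Lean document; each statement's English description precedes it below -/
import Mathlib

section
/- Let V be a vector configuration in a finite-dimensional real vector space E with dim E ≥ 1 and disc(V) > 0. Then there exists a subfamily W of V of rank 1 that is linearly closed in V, with disc(W) > 0 and disc(V) = disc(W) + disc(V/W). -/
open scoped Classical

noncomputable section

variable {E : Type*} [AddCommGroup E] [Module ℝ E] {ι : Type*} [Fintype ι]

/-- Number of indices where the functional is positive. -/
def posCount (φ : E →ₗ[ℝ] ℝ) (V : ι → E) : ℕ :=
  (Finset.univ.filter fun i => 0 < φ (V i)).card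

/-- Number of indices where the functional is negative. -/
def negCount (φ : E →ₗ[ℝ] ℝ) (V : ι → E) : ℕ :=
  (Finset.univ.filter fun i => φ (V i) < 0).card

/-- Number of indices where the functional is nonpositive. -/
def nonposCount (φ : E →ₗ[ℝ] ℝ) (V : ι → E) : ℕ :=
  (Finset.univ.filter fun i => φ (V i) ≤ 0).card

/-- Dual codegree: minimum over nonzero functionals of `nonposCount`; by convention the
number of elements when the ambient space is zero-dimensional (trivial). -/
def codegStar (V : ι → E) : ℕ :=
  if Nontrivial E then
    sInf {k | ∃ φ : E →ₗ[ℝ] ℝ, φ ≠ 0 ∧ nonposCount φ V = k}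
  else Fintype.card ι

/-- Rank of a configuration: dimension of the linear span. -/
def confRank (V : ι → E) : ℕ :=
  Module.finrank ℝ (Submodule.span ℝ (Set.range V))

/-- Dual degree: maximum over nonzero functionals of `posCount`, minus the rank. -/
def degStar (V : ι → E) : ℤ :=
  (sSup {k | ∃ φ : E →ₗ[ℝ] ℝ, φ ≠ 0 ∧ posCount φ V = k} : ℕ) - (confRank V : ℤ)

/-- Covector discrepancy: maximum over all functionals of `|φ⁺(V) − φ⁻(V)|`. -/
def disc (V : ι → E) : ℕ :=
  sSup {k | ∃ φ : E →ₗ[ℝ] ℝ, k = ((posCount φ V : ℤ) - (negCount φ V : ℤ)).natAbs}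

/-- The subfamily of `V` indexed by `S`. -/
def subfam (V : ι → E) (S : Finset ι) : {i // i ∈ S} → E := fun i => V i.1

/-- The contraction `V/W`, where `W = V|S`: images of the remaining vectors in the
quotient by the span of `W`. -/
def contract (V : ι → E) (S : Finset ι) :
    {i // i ∉ S} → E ⧸ Submodule.span ℝ (V '' (S : Set ι)) :=
  fun i => Submodule.Quotient.mk (V i.1)

/-- `V|S` is linearly closed in `V`. -/
def LinClosed (V : ι → E) (S : Finset ι) : Prop :=
  ∀ i, V i ∈ Submodule.span ℝ (V '' (S : Set ι)) → i ∈ S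

/-- A codegree* decomposition of `V` of length `m`: a partition of the index set into
parts `S 0, S 1, …, S m` with `codegStar (V|S i) ≥ 1` for `i ≠ 0` and
`codegStar V = ∑_{i=1}^m codegStar (V|S i)`. -/
def IsCodegDecomp (V : ι → E) (m : ℕ) (S : Fin (m + 1) → Finset ι) : Prop :=
  (∀ i j, i ≠ j → Disjoint (S i) (S j)) ∧
  (∀ x, ∃ i, x ∈ S i) ∧
  (∀ i, i ≠ 0 → 1 ≤ codegStar (subfam V (S i))) ∧
  codegStar V = ∑ i ∈ Finset.univ.erase (0 : Fin (m + 1)), codegStar (subfam V (S i))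


namespace DP

def sg (x : ℝ) : ℤ := if 0 < x then 1 else if x < 0 then -1 else 0
lemma sg_zero : sg 0 = 0 := by simp [sg]
lemma sg_pos {x : ℝ} (h : 0 < x) : sg x = 1 := by simp [sg, h]
lemma sg_neg {x : ℝ} (h : x < 0) : sg x = -1 := by
  simp [sg, h, not_lt_of_gt h, asymm h]
lemma sg_eq_zero_iff {x : ℝ} : sg x = 0 ↔ x = 0 := by
  rcases lt_trichotomy x 0 with h | h | h
  · simp [sg_neg h, h.ne]
  · simp [h, sg_zero]
  · simp [sg_pos h, h.ne']
lemma sg_neg_eq (x : ℝ) : sg (-x) = - sg x := by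
  rcases lt_trichotomy x 0 with h | h | h
  · rw [sg_neg h, sg_pos (by linarith)]; ring
  · simp [h, sg_zero]
  · rw [sg_pos h, sg_neg (by linarith)]
lemma sg_mul (x y : ℝ) : sg (x * y) = sg x * sg y := by
  rcases lt_trichotomy x 0 with hx | hx | hx <;>
    rcases lt_trichotomy y 0 with hy | hy | hy <;>
      simp [hx, hy, sg_zero, sg_pos, sg_neg, mul_pos, mul_pos_of_neg_of_neg,
        mul_neg_of_pos_of_neg, mul_neg_of_neg_of_pos]
lemma sg_smul_pos {t : ℝ} (ht : 0 < t) (x : ℝ) : sg (t * x) = sg x := by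
  rw [sg_mul, sg_pos ht, one_mul]
lemma natAbs_sg_le (x : ℝ) : (sg x).natAbs ≤ 1 := by
  unfold sg; split <;> [simp; (split <;> simp)]
lemma sg_add_of_abs_lt {x y : ℝ} (h : |y| < |x|) : sg (x + y) = sg x := by
  rcases lt_trichotomy x 0 with hx | hx | hx
  · rw [sg_neg hx, sg_neg]; rw [abs_of_neg hx] at h
    cases' abs_lt.1 h with h1 h2; linarith
  · simp [hx] at h; exact absurd h (by simp)
  · rw [sg_pos hx, sg_pos]; rw [abs_of_pos hx] at h
    cases' abs_lt.1 h with h1 h2; linarith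

/-- signed imbalance -/
def imb {F : Type*} [AddCommGroup F] [Module ℝ F] {κ : Type*} [Fintype κ]
    (φ : F →ₗ[ℝ] ℝ) (W : κ → F) : ℤ := ∑ i, sg (φ (W i))

variable {F : Type*} [AddCommGroup F] [Module ℝ F] {κ : Type*} [Fintype κ]

lemma imb_eq_counts (φ : F →ₗ[ℝ] ℝ) (W : κ → F) :
    imb φ W = (posCount φ W : ℤ) - (negCount φ W : ℤ) := by
  unfold imb posCount negCount
  have h : ∀ i : κ, sg (φ (W i)) =
      (if 0 < φ (W i) then (1:ℤ) else 0) + (if φ (W i) < 0 then (-1:ℤ) else 0) := by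
    intro i
    rcases lt_trichotomy (φ (W i)) 0 with h | h | h
    · simp [sg_neg h, h, asymm h]
    · simp [h, sg_zero]
    · simp [sg_pos h, h, asymm h]
  rw [Finset.sum_congr rfl fun i _ => h i, Finset.sum_add_distrib, Finset.sum_boole]
  have h2 : (∑ i : κ, if φ (W i) < 0 then (-1:ℤ) else 0)
      = -((Finset.univ.filter fun i => φ (W i) < 0).card : ℤ) := by
    rw [← Finset.sum_boole (fun i => φ (W i) < 0) Finset.univ, ← Finset.sum_neg_distrib]
    exact Finset.sum_congr rfl fun i _ => by split <;> simp
  rw [h2]; ring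

lemma natAbs_imb_le (φ : F →ₗ[ℝ] ℝ) (W : κ → F) : (imb φ W).natAbs ≤ Fintype.card κ := by
  have h : |imb φ W| ≤ (Fintype.card κ : ℤ) := by
    calc |∑ i, sg (φ (W i))| ≤ ∑ i, |sg (φ (W i))| := Finset.abs_sum_le_sum_abs _ _
      _ ≤ ∑ _i : κ, 1 := Finset.sum_le_sum fun i _ => by
            unfold sg; split <;> [simp; (split <;> simp)]
      _ = (Fintype.card κ : ℤ) := by simp
  rw [Int.abs_eq_natAbs] at h
  exact_mod_cast h

lemma discSet_nonempty (W : κ → F) :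
    {k | ∃ φ : F →ₗ[ℝ] ℝ, k = ((posCount φ W : ℤ) - (negCount φ W : ℤ)).natAbs}.Nonempty := by
  exact ⟨_, 0, rfl⟩

lemma discSet_bdd (W : κ → F) :
    BddAbove {k | ∃ φ : F →ₗ[ℝ] ℝ, k = ((posCount φ W : ℤ) - (negCount φ W : ℤ)).natAbs} := by
  refine ⟨Fintype.card κ, fun k hk => ?_⟩
  obtain ⟨φ, rfl⟩ := hk
  rw [← imb_eq_counts]
  exact natAbs_imb_le φ W

lemma natAbs_imb_le_disc (φ : F →ₗ[ℝ] ℝ) (W : κ → F) : (imb φ W).natAbs ≤ disc W :=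
  le_csSup (discSet_bdd W) ⟨φ, by rw [imb_eq_counts]⟩

lemma imb_le_disc (φ : F →ₗ[ℝ] ℝ) (W : κ → F) : imb φ W ≤ (disc W : ℤ) :=
  le_trans (Int.le_natAbs) (by exact_mod_cast natAbs_imb_le_disc φ W)

lemma imb_neg (φ : F →ₗ[ℝ] ℝ) (W : κ → F) : imb (-φ) W = - imb φ W := by
  unfold imb
  rw [← Finset.sum_neg_distrib]
  exact Finset.sum_congr rfl fun i _ => by rw [LinearMap.neg_apply, sg_neg_eq]

lemma exists_imb_eq_disc (W : κ → F) : ∃ φ : F →ₗ[ℝ] ℝ, imb φ W = (disc W : ℤ) := by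
  have hmem : disc W ∈ _ := Nat.sSup_mem (discSet_nonempty W) (discSet_bdd W)
  obtain ⟨φ, hφ⟩ := hmem
  rw [← imb_eq_counts] at hφ
  rcases le_or_gt 0 (imb φ W) with h | h
  · exact ⟨φ, by rw [hφ]; exact (Int.natAbs_of_nonneg h).symm ▸ rfl⟩
  · refine ⟨-φ, ?_⟩
    rw [imb_neg, hφ]
    omega

lemma exists_perturb (W : κ → F) (φ ψ : F →ₗ[ℝ] ℝ) :
    ∃ t : ℝ, 0 < t ∧ ∀ i, φ (W i) ≠ 0 → sg ((φ + t • ψ) (W i)) = sg (φ (W i)) := by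
  set P := Finset.univ.filter fun i => φ (W i) ≠ 0 with hP
  set T : Finset ℝ := insert 1 (P.image fun i => |φ (W i)| / (|ψ (W i)| + 1)) with hT
  have hTne : T.Nonempty := ⟨1, Finset.mem_insert_self _ _⟩
  have hTpos : ∀ x ∈ T, 0 < x := by
    intro x hx
    rcases Finset.mem_insert.1 hx with h | h
    · rw [h]; norm_num
    · obtain ⟨i, hi, hEq⟩ := Finset.mem_image.1 h
      have hφi : φ (W i) ≠ 0 := (Finset.mem_filter.1 hi).2
      rw [← hEq]; positivity
  have hipos : 0 < T.min' hTne := hTpos _ (T.min'_mem hTne)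
  refine ⟨T.min' hTne, hipos, ?_⟩
  intro i hφi
  have hle : T.min' hTne ≤ |φ (W i)| / (|ψ (W i)| + 1) := by
    apply Finset.min'_le
    exact Finset.mem_insert_of_mem (Finset.mem_image_of_mem _
      (Finset.mem_filter.2 ⟨Finset.mem_univ i, hφi⟩))
  have key : |T.min' hTne * ψ (W i)| < |φ (W i)| := by
    have h1 : (0:ℝ) < |ψ (W i)| + 1 := by positivity
    have h2 : T.min' hTne * (|ψ (W i)| + 1) ≤ |φ (W i)| := by
      rw [← le_div_iff₀ h1]; exact hle
    rw [abs_mul, abs_of_pos hipos]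
    nlinarith [abs_nonneg (ψ (W i))]
  have heval : (φ + T.min' hTne • ψ) (W i) = φ (W i) + T.min' hTne * ψ (W i) := by
    simp [LinearMap.add_apply, LinearMap.smul_apply, smul_eq_mul]
  rw [heval]
  exact sg_add_of_abs_lt key

lemma exists_dual_ne_zero {w : F} (hw : w ≠ 0) : ∃ ψ : F →ₗ[ℝ] ℝ, ψ w ≠ 0 := by
  by_contra h
  push_neg at h
  exact hw ((Module.forall_dual_apply_eq_zero_iff ℝ w).1 h)

lemma exists_generic_max (W : κ → F) :
    ∃ φ : F →ₗ[ℝ] ℝ, imb φ W = (disc W : ℤ) ∧ ∀ i, W i ≠ 0 → φ (W i) ≠ 0 := by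
  set N : Set ℕ := {n | ∃ φ : F →ₗ[ℝ] ℝ, imb φ W = (disc W : ℤ) ∧
    (Finset.univ.filter fun i => W i ≠ 0 ∧ φ (W i) = 0).card = n} with hN
  have hNne : N.Nonempty := by
    obtain ⟨φ, hφ⟩ := exists_imb_eq_disc W
    exact ⟨_, φ, hφ, rfl⟩
  obtain ⟨φ, hφmax, hφcard⟩ := Nat.sInf_mem hNne
  refine ⟨φ, hφmax, ?_⟩
  by_contra hcon
  push_neg at hcon
  obtain ⟨i0, hWi0, hφi0⟩ := hcon
  set Z := Finset.univ.filter fun i => W i ≠ 0 ∧ φ (W i) = 0 with hZ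
  have hi0Z : i0 ∈ Z := Finset.mem_filter.2 ⟨Finset.mem_univ _, hWi0, hφi0⟩
  obtain ⟨ψ0, hψ0⟩ := exists_dual_ne_zero hWi0
  -- choose sign
  obtain ⟨ψ, hψi0, hψsum⟩ : ∃ ψ : F →ₗ[ℝ] ℝ, ψ (W i0) ≠ 0 ∧
      0 ≤ ∑ i ∈ Z, sg (ψ (W i)) := by
    rcases le_or_gt 0 (∑ i ∈ Z, sg (ψ0 (W i))) with h | h
    · exact ⟨ψ0, hψ0, h⟩
    · refine ⟨-ψ0, by simpa using hψ0, ?_⟩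
      have : ∑ i ∈ Z, sg ((-ψ0) (W i)) = -∑ i ∈ Z, sg (ψ0 (W i)) := by
        rw [← Finset.sum_neg_distrib]
        exact Finset.sum_congr rfl fun i _ => by rw [LinearMap.neg_apply, sg_neg_eq]
      rw [this]; omega
  obtain ⟨t, ht, hpres⟩ := exists_perturb W φ ψ
  set φ' := φ + t • ψ with hφ'
  -- compute imb φ'
  have hsplit : ∀ i, sg (φ' (W i)) = (if i ∈ Z then sg (ψ (W i)) else sg (φ (W i))) := by
    intro i
    by_cases hiZ : i ∈ Z
    · obtain ⟨hne, hzero⟩ := (Finset.mem_filter.1 hiZ).2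
      have : φ' (W i) = t * ψ (W i) := by
        simp [hφ', LinearMap.add_apply, LinearMap.smul_apply, smul_eq_mul, hzero]
      rw [this, sg_smul_pos ht, if_pos hiZ]
    · rw [if_neg hiZ]
      by_cases hW : W i = 0
      · simp [hW]
      · have hφne : φ (W i) ≠ 0 := by
          intro h0
          exact hiZ (Finset.mem_filter.2 ⟨Finset.mem_univ _, hW, h0⟩)
        exact hpres i hφne
  have himb' : imb φ' W = imb φ W + ∑ i ∈ Z, sg (ψ (W i)) := by
    unfold imb
    rw [Finset.sum_congr rfl fun i _ => hsplit i]
    rw [← Finset.sum_add_sum_compl Z (fun i => sg (φ (W i)))]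
    rw [← Finset.sum_add_sum_compl Z
      (fun i => if i ∈ Z then sg (ψ (W i)) else sg (φ (W i)))]
    have h1 : ∑ i ∈ Z, (if i ∈ Z then sg (ψ (W i)) else sg (φ (W i))) =
        ∑ i ∈ Z, sg (ψ (W i)) := Finset.sum_congr rfl fun i hi => if_pos hi
    have h2 : ∑ i ∈ Zᶜ, (if i ∈ Z then sg (ψ (W i)) else sg (φ (W i))) =
        ∑ i ∈ Zᶜ, sg (φ (W i)) :=
      Finset.sum_congr rfl fun i hi => if_neg (Finset.mem_compl.1 hi)
    have h3 : ∑ i ∈ Z, sg (φ (W i)) = 0 := by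
      apply Finset.sum_eq_zero
      intro i hi
      rw [sg_eq_zero_iff]
      exact (Finset.mem_filter.1 hi).2.2
    rw [h1, h2, h3]; ring
  have hle : imb φ' W ≤ (disc W : ℤ) := imb_le_disc φ' W
  have himb'' : imb φ' W = (disc W : ℤ) := by omega
  -- new zero set is strictly smaller
  set Z' := Finset.univ.filter fun i => W i ≠ 0 ∧ φ' (W i) = 0 with hZ'
  have hsub : Z' ⊆ Z := by
    intro i hi
    obtain ⟨hne, hzero⟩ := (Finset.mem_filter.1 hi).2
    by_contra hiZ
    have := hsplit i
    rw [if_neg hiZ, hzero, sg_zero] at this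
    have hφne : φ (W i) ≠ 0 := by
      intro h0
      exact hiZ (Finset.mem_filter.2 ⟨Finset.mem_univ _, hne, h0⟩)
    exact hφne (sg_eq_zero_iff.1 this.symm)
  have hi0' : i0 ∉ Z' := by
    intro hmem
    obtain ⟨_, hzero⟩ := (Finset.mem_filter.1 hmem).2
    have h0 : φ' (W i0) = t * ψ (W i0) := by
      simp [hφ', LinearMap.add_apply, LinearMap.smul_apply, smul_eq_mul, hφi0]
    rw [h0] at hzero
    exact hψi0 (by
      rcases mul_eq_zero.1 hzero with h | h
      · exact absurd h ht.ne'
      · exact h)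
  have hlt : Z'.card < Z.card :=
    Finset.card_lt_card (Finset.ssubset_iff_of_subset hsub |>.2 ⟨i0, hi0Z, hi0'⟩)
  have : sInf N ≤ Z'.card := Nat.sInf_le ⟨φ', himb'', rfl⟩
  omega

lemma exists_sep (T : Finset F) :
    ∃ α : F →ₗ[ℝ] ℝ, ∀ u ∈ T, u ≠ 0 → α u ≠ 0 := by
  classical
  induction T using Finset.induction_on with
  | empty => exact ⟨0, fun u hu => absurd hu (Finset.notMem_empty u)⟩
  | @insert u T' hnotmem ih =>
    obtain ⟨α, hα⟩ := ih
    by_cases hu : u = 0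
    · refine ⟨α, fun w hw hwne => ?_⟩
      rcases Finset.mem_insert.1 hw with h | h
      · exact absurd (h.trans hu) hwne
      · exact hα w h hwne
    · obtain ⟨β, hβ⟩ := exists_dual_ne_zero hu
      set bad : Finset ℝ :=
        insert (-(α u) / (β u)) ((T'.filter fun w => β w ≠ 0).image fun w => -(α w) / (β w))
        with hbad
      obtain ⟨c, hc⟩ := Infinite.exists_notMem_finset bad
      refine ⟨α + c • β, fun w hw hwne => ?_⟩
      have heval : (α + c • β) w = α w + c * β w := by
        simp [LinearMap.add_apply, LinearMap.smul_apply, smul_eq_mul]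
      rw [heval]
      rcases Finset.mem_insert.1 hw with h | h
      · subst h
        intro h0
        apply hc
        have hceq : c = -(α w) / β w := by field_simp; linarith
        rw [hbad, hceq]
        exact Finset.mem_insert_self _ _
      · by_cases hβw : β w = 0
        · rw [hβw, mul_zero, add_zero]
          exact hα w h hwne
        · intro h0
          apply hc
          have : c = -(α w) / β w := by field_simp; linarith
          rw [hbad, this]
          exact Finset.mem_insert_of_mem (Finset.mem_image_of_mem _
            (Finset.mem_filter.2 ⟨h, hβw⟩))

/-- parallel (with nonzero coefficient) -/
def par (W : κ → F) (j i : κ) : Prop := ∃ c : ℝ, c ≠ 0 ∧ W j = c • W i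

/-- the parallel class of `i` -/
def cls (W : κ → F) (i : κ) : Finset κ := Finset.univ.filter fun j => par W j i

/-- balanced class -/
def Bal (W : κ → F) (i : κ) : Prop := ∀ ψ : F →ₗ[ℝ] ℝ, ∑ j ∈ cls W i, sg (ψ (W j)) = 0

lemma par_refl (W : κ → F) (i : κ) : par W i i := ⟨1, one_ne_zero, (one_smul ℝ _).symm⟩

lemma mem_cls_self (W : κ → F) (i : κ) : i ∈ cls W i :=
  Finset.mem_filter.2 ⟨Finset.mem_univ _, par_refl W i⟩

lemma clsSum_congr (W : κ → F) (i : κ) (ψ ψ' : F →ₗ[ℝ] ℝ)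
    (h : sg (ψ (W i)) = sg (ψ' (W i))) :
    ∑ j ∈ cls W i, sg (ψ (W j)) = ∑ j ∈ cls W i, sg (ψ' (W j)) := by
  refine Finset.sum_congr rfl fun j hj => ?_
  obtain ⟨c, hc, hEq⟩ := (Finset.mem_filter.1 hj).2
  rw [hEq]
  have e1 : ψ (c • W i) = c * ψ (W i) := by rw [map_smul, smul_eq_mul]
  have e2 : ψ' (c • W i) = c * ψ' (W i) := by rw [map_smul, smul_eq_mul]
  rw [e1, e2, sg_mul, sg_mul, h]

lemma clsSum_neg (W : κ → F) (i : κ) (ψ : F →ₗ[ℝ] ℝ) :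
    ∑ j ∈ cls W i, sg ((-ψ) (W j)) = -∑ j ∈ cls W i, sg (ψ (W j)) := by
  rw [← Finset.sum_neg_distrib]
  exact Finset.sum_congr rfl fun j _ => by rw [LinearMap.neg_apply, sg_neg_eq]

lemma notBal_sum_ne (W : κ → F) (i : κ) (hnb : ¬ Bal W i)
    (φ : F →ₗ[ℝ] ℝ) (hφ : φ (W i) ≠ 0) : ∑ j ∈ cls W i, sg (φ (W j)) ≠ 0 := by
  unfold Bal at hnb
  push_neg at hnb
  obtain ⟨ψ, hψ⟩ := hnb
  have hψi : ψ (W i) ≠ 0 := by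
    intro h0
    apply hψ
    refine Finset.sum_eq_zero fun j hj => ?_
    obtain ⟨c, hc, hEq⟩ := (Finset.mem_filter.1 hj).2
    rw [hEq, map_smul, smul_eq_mul, h0, mul_zero, sg_zero]
  rcases lt_trichotomy (ψ (W i)) 0 with h1 | h1 | h1
  · rcases lt_trichotomy (φ (W i)) 0 with h2 | h2 | h2
    · rw [clsSum_congr W i φ ψ (by rw [sg_neg h1, sg_neg h2])]; exact hψ
    · exact absurd h2 hφ
    · rw [clsSum_congr W i φ (-ψ)
        (by simp only [sg_pos h2, LinearMap.neg_apply, sg_neg_eq, sg_neg h1, neg_neg]),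
        clsSum_neg]
      simpa using hψ
  · exact absurd h1 hψi
  · rcases lt_trichotomy (φ (W i)) 0 with h2 | h2 | h2
    · rw [clsSum_congr W i φ (-ψ)
        (by simp only [sg_neg h2, LinearMap.neg_apply, sg_neg_eq, sg_pos h1]),
        clsSum_neg]
      simpa using hψ
    · exact absurd h2 hφ
    · rw [clsSum_congr W i φ ψ (by rw [sg_pos h1, sg_pos h2])]; exact hψ

lemma par_trans_aux {W : κ → F} {i j k : κ} (hWi : W i ≠ 0)
    (hji : par W j i) (hjk : par W j k) : par W i k := by
  obtain ⟨c, hc, hEq⟩ := hji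
  obtain ⟨c', hc', hEq'⟩ := hjk
  exact ⟨c⁻¹ * c', by simp [hc, hc'], by
    rw [mul_smul, ← hEq', hEq, ← mul_smul, inv_mul_cancel₀ hc, one_smul]⟩

lemma sumBalanced (W : κ → F) :
    ∀ (n : ℕ) (T : Finset κ), T.card ≤ n →
    (∀ i ∈ T, W i ≠ 0 → ∀ j, par W j i → j ∈ T) →
    (∀ i ∈ T, W i ≠ 0 → Bal W i) →
    ∀ ψ : F →ₗ[ℝ] ℝ, ∑ j ∈ T, sg (ψ (W j)) = 0 := by
  intro n
  induction n with
  | zero =>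
    intro T hcard _ _ ψ
    rw [Finset.card_eq_zero.1 (Nat.le_zero.1 hcard)]
    simp
  | succ n ih =>
    intro T hcard hcl hbal ψ
    by_cases hz : ∀ i ∈ T, W i = 0
    · exact Finset.sum_eq_zero fun j hj => by rw [hz j hj, map_zero, sg_zero]
    · push_neg at hz
      obtain ⟨i0, hi0T, hi0⟩ := hz
      have hsub : cls W i0 ⊆ T := fun j hj =>
        hcl i0 hi0T hi0 j (Finset.mem_filter.1 hj).2
      have hclsum : ∑ j ∈ cls W i0, sg (ψ (W j)) = 0 := hbal i0 hi0T hi0 ψ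
      have hTd : ∑ j ∈ T \ cls W i0, sg (ψ (W j)) = 0 := by
        apply ih
        · have h1 : (cls W i0).card ≥ 1 := Finset.card_pos.2 ⟨i0, mem_cls_self W i0⟩
          have h2 : (T \ cls W i0).card = T.card - (cls W i0).card :=
            Finset.card_sdiff_of_subset hsub
          omega
        · intro i hiT hWi j hpar
          rcases Finset.mem_sdiff.1 hiT with ⟨hiT', hicls⟩
          refine Finset.mem_sdiff.2 ⟨hcl i hiT' hWi j hpar, ?_⟩
          intro hjcls
          exact hicls (Finset.mem_filter.2 ⟨Finset.mem_univ _,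
            par_trans_aux hWi hpar (Finset.mem_filter.1 hjcls).2⟩)
        · intro i hiT hWi
          exact hbal i (Finset.mem_sdiff.1 hiT).1 hWi
      rw [← Finset.sum_sdiff hsub, hTd, hclsum]
      norm_num

lemma clsSum_zero (W : κ → F) (i : κ) (φ' : F →ₗ[ℝ] ℝ) (h0 : φ' (W i) = 0) :
    ∑ j ∈ cls W i, sg (φ' (W j)) = 0 := by
  refine Finset.sum_eq_zero fun j hj => ?_
  obtain ⟨c, hc, hEq⟩ := (Finset.mem_filter.1 hj).2
  rw [hEq, map_smul, smul_eq_mul, h0, mul_zero, sg_zero]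

lemma clsSum_cases (W : κ → F) (i : κ) (φ φ' : F →ₗ[ℝ] ℝ)
    (hgen : W i ≠ 0 → φ (W i) ≠ 0) :
    (∑ j ∈ cls W i, sg (φ' (W j)) = 0) ∨
    (∑ j ∈ cls W i, sg (φ' (W j)) = ∑ j ∈ cls W i, sg (φ (W j))) ∨
    (∑ j ∈ cls W i, sg (φ' (W j)) = -∑ j ∈ cls W i, sg (φ (W j))) := by
  by_cases h0 : φ' (W i) = 0
  · exact Or.inl (clsSum_zero W i φ' h0)
  by_cases h1 : φ (W i) = 0
  · exfalso
    by_cases hW : W i = 0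
    · exact h0 (by rw [hW, map_zero])
    · exact hgen hW h1
  rcases lt_trichotomy (φ' (W i)) 0 with h2 | h2 | h2
  · rcases lt_trichotomy (φ (W i)) 0 with h3 | h3 | h3
    · exact Or.inr (Or.inl (clsSum_congr W i φ' φ (by rw [sg_neg h2, sg_neg h3])))
    · exact absurd h3 h1
    · refine Or.inr (Or.inr ?_)
      rw [clsSum_congr W i φ' (-φ)
        (by simp only [sg_neg h2, LinearMap.neg_apply, sg_neg_eq, sg_pos h3]),
        clsSum_neg]
  · exact absurd h2 h0
  · rcases lt_trichotomy (φ (W i)) 0 with h3 | h3 | h3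
    · refine Or.inr (Or.inr ?_)
      rw [clsSum_congr W i φ' (-φ)
        (by simp only [sg_pos h2, LinearMap.neg_apply, sg_neg_eq, sg_neg h3, neg_neg]),
        clsSum_neg]
    · exact absurd h3 h1
    · exact Or.inr (Or.inl (clsSum_congr W i φ' φ (by rw [sg_pos h2, sg_pos h3])))

end DP

/-- if `disc V > 0` there is a rank-1 linearly closed subfamily `W` with
`disc W > 0` and `disc V = disc W + disc (V/W)`. -/
theorem exists_rank_one_extremal_subfam {E : Type*} [AddCommGroup E] [Module ℝ E]
    [FiniteDimensional ℝ E] (hE : 1 ≤ Module.finrank ℝ E)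
    {ι : Type*} [Fintype ι] (V : ι → E) (hV : 0 < disc V) :
    ∃ S : Finset ι, LinClosed V S ∧ confRank (subfam V S) = 1 ∧
      0 < disc (subfam V S) ∧
      disc V = disc (subfam V S) + disc (contract V S) := by
  classical
  obtain ⟨φ, hφmax, hφgen⟩ := DP.exists_generic_max V
  obtain ⟨α, hα⟩ := DP.exists_sep ((Finset.univ : Finset (ι × ι)).image
    fun p => φ (V p.2) • V p.1 - φ (V p.1) • V p.2)
  set r : ι → ℝ := fun i => α (V i) / φ (V i) with hrdef
  have hrpar : ∀ i j : ι, V i ≠ 0 → DP.par V j i → r j = r i := by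
    intro i j hVi ⟨c, hc, hEq⟩
    show α (V j) / φ (V j) = α (V i) / φ (V i)
    rw [hEq, map_smul, map_smul, smul_eq_mul, smul_eq_mul, mul_div_mul_left _ _ hc]
  have hrne : ∀ i j : ι, V i ≠ 0 → V j ≠ 0 → ¬ DP.par V j i → r i ≠ r j := by
    intro i j hVi hVj hnp hEqr
    have hφi : φ (V i) ≠ 0 := hφgen i hVi
    have hφj : φ (V j) ≠ 0 := hφgen j hVj
    have hu : φ (V j) • V i - φ (V i) • V j ≠ 0 := by
      intro h0
      apply hnp
      have h1 : φ (V j) • V i = φ (V i) • V j := by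
        rw [← sub_eq_zero]; exact h0
      refine ⟨φ (V j) / φ (V i), ?_, ?_⟩
      · intro hq
        rw [div_eq_zero_iff] at hq
        rcases hq with h | h
        · exact hφj h
        · exact hφi h
      · rw [div_eq_inv_mul, mul_smul, h1, ← mul_smul, inv_mul_cancel₀ hφi, one_smul]
    have hαu : α (φ (V j) • V i - φ (V i) • V j) ≠ 0 :=
      hα _ (Finset.mem_image.2 ⟨(i, j), Finset.mem_univ _, rfl⟩) hu
    apply hαu
    have : α (V i) / φ (V i) = α (V j) / φ (V j) := hEqr
    rw [div_eq_div_iff hφi hφj] at this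
    rw [map_sub, map_smul, map_smul, smul_eq_mul, smul_eq_mul]
    linarith
  -- unbalanced class exists
  set U := Finset.univ.filter (fun i => V i ≠ 0 ∧ ¬ DP.Bal V i) with hUdef
  have hUne : U.Nonempty := by
    rw [Finset.nonempty_iff_ne_empty]
    intro hUe
    have hbal : ∀ i ∈ (Finset.univ : Finset ι), V i ≠ 0 → DP.Bal V i := by
      intro i _ hVi
      by_contra hnb
      have : i ∈ U := Finset.mem_filter.2 ⟨Finset.mem_univ _, hVi, hnb⟩
      rw [hUe] at this
      exact Finset.notMem_empty _ this
    have h0 := DP.sumBalanced V (Fintype.card ι) Finset.univ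
      (by rw [Finset.card_univ]) (fun i _ _ j _ => Finset.mem_univ j) hbal φ
    have : DP.imb φ V = 0 := h0
    rw [hφmax] at this
    omega
  obtain ⟨istar, histarU, hmax⟩ := U.exists_max_image r hUne
  have hd0 : V istar ≠ 0 := ((Finset.mem_filter.1 histarU).2).1
  have hnb : ¬ DP.Bal V istar := ((Finset.mem_filter.1 histarU).2).2
  have hφd : φ (V istar) ≠ 0 := hφgen istar hd0
  set S := Finset.univ.filter (fun i => V i ∈ Submodule.span ℝ {V istar}) with hSdef
  have hSmem : ∀ i, i ∈ S ↔ V i ∈ Submodule.span ℝ {V istar} := by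
    intro i; rw [hSdef, Finset.mem_filter]; simp
  have histarS : istar ∈ S := (hSmem istar).2 (Submodule.mem_span_singleton_self _)
  have hspan : Submodule.span ℝ (V '' ↑S) = Submodule.span ℝ {V istar} := by
    apply le_antisymm
    · rw [Submodule.span_le]
      rintro x ⟨i, hi, rfl⟩
      exact (hSmem i).1 hi
    · rw [Submodule.span_le]
      rintro x hx
      rw [Set.mem_singleton_iff] at hx
      subst hx
      exact Submodule.subset_span ⟨istar, histarS, rfl⟩
  have hclsS : DP.cls V istar ⊆ S := by
    intro j hj
    obtain ⟨c, hc, hEq⟩ := (Finset.mem_filter.1 hj).2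
    refine (hSmem j).2 ?_
    rw [hEq]
    exact Submodule.smul_mem _ c (Submodule.mem_span_singleton_self _)
  have hsumS : ∀ ψ' : E →ₗ[ℝ] ℝ, ∑ j ∈ S, DP.sg (ψ' (V j)) =
      ∑ j ∈ DP.cls V istar, DP.sg (ψ' (V j)) := by
    intro ψ'
    refine (Finset.sum_subset hclsS ?_).symm
    intro j hjS hjcls
    obtain ⟨a, ha⟩ := Submodule.mem_span_singleton.1 ((hSmem j).1 hjS)
    have ha0 : a = 0 := by
      by_contra ha0
      exact hjcls (Finset.mem_filter.2 ⟨Finset.mem_univ _, ⟨a, ha0, ha.symm⟩⟩)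
    rw [← ha, ha0, zero_smul, map_zero, DP.sg_zero]
  set c : ℤ := ∑ j ∈ S, DP.sg (φ (V j)) with hcdef
  have hcne : c ≠ 0 := by
    rw [hcdef, hsumS φ]
    exact DP.notBal_sum_ne V istar hnb φ hφd
  set ψ : E →ₗ[ℝ] ℝ := r istar • φ - α with hψdef
  have hψspan : ∀ x ∈ Submodule.span ℝ {V istar}, ψ x = 0 := by
    intro x hx
    obtain ⟨a, ha⟩ := Submodule.mem_span_singleton.1 hx
    rw [← ha, map_smul, smul_eq_mul]
    have : ψ (V istar) = 0 := by
      rw [hψdef]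
      simp only [LinearMap.sub_apply, LinearMap.smul_apply, smul_eq_mul]
      rw [hrdef]
      field_simp
      ring
    rw [this, mul_zero]
  have hψS : ∀ j ∈ S, ψ (V j) = 0 := fun j hj => hψspan _ ((hSmem j).1 hj)
  have hVC : ∀ j, j ∉ S → V j ≠ 0 := by
    intro j hj h0
    exact hj ((hSmem j).2 (by rw [h0]; exact Submodule.zero_mem _))
  have hnparC : ∀ j, j ∉ S → ¬ DP.par V j istar := by
    intro j hj hp
    obtain ⟨cc, hcc, hEq⟩ := hp
    apply hj
    refine (hSmem j).2 ?_
    rw [hEq]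
    exact Submodule.smul_mem _ cc (Submodule.mem_span_singleton_self _)
  have hrC : ∀ j, j ∉ S → r j ≠ r istar := by
    intro j hj
    exact fun h => (hrne istar j hd0 (hVC j hj) (hnparC j hj)) h.symm
  have hψC : ∀ j, j ∉ S → ψ (V j) = φ (V j) * (r istar - r j) := by
    intro j hj
    have hφj : φ (V j) ≠ 0 := hφgen j (hVC j hj)
    have hαj : α (V j) = r j * φ (V j) := by
      rw [hrdef]
      field_simp
    rw [hψdef]
    simp only [LinearMap.sub_apply, LinearMap.smul_apply, smul_eq_mul]
    rw [hαj]
    ring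
  set B := Sᶜ.filter (fun j => r istar < r j) with hBdef
  set Lw := Sᶜ.filter (fun j => ¬ r istar < r j) with hLwdef
  have hLwlt : ∀ j ∈ Lw, r j < r istar := by
    intro j hj
    obtain ⟨hjc, hnlt⟩ := Finset.mem_filter.1 hj
    have := hrC j (Finset.mem_compl.1 hjc)
    push_neg at hnlt
    exact lt_of_le_of_ne hnlt this
  have hBsum : ∀ ψ' : E →ₗ[ℝ] ℝ, ∑ j ∈ B, DP.sg (ψ' (V j)) = 0 := by
    intro ψ'
    apply DP.sumBalanced V (Fintype.card ι) B (Finset.card_le_univ B)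
    · -- closure
      intro i hiB hVi j hpar
      obtain ⟨hic, hilt⟩ := Finset.mem_filter.1 hiB
      have hVj : V j ≠ 0 := by
        obtain ⟨cc, hcc, hEq⟩ := hpar
        rw [hEq]
        exact smul_ne_zero hcc hVi
      have hjc : j ∉ S := by
        intro hjS
        obtain ⟨a, ha⟩ := Submodule.mem_span_singleton.1 ((hSmem j).1 hjS)
        have ha0 : a ≠ 0 := by
          intro h0
          rw [h0, zero_smul] at ha
          exact hVj ha.symm
        apply hnparC i (Finset.mem_compl.1 hic)
        obtain ⟨cc, hcc, hEq⟩ := hpar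
        refine ⟨cc⁻¹ * a, by simp [hcc, ha0], ?_⟩
        rw [mul_smul, ha, hEq, ← mul_smul, inv_mul_cancel₀ hcc, one_smul]
      refine Finset.mem_filter.2 ⟨Finset.mem_compl.2 hjc, ?_⟩
      rw [hrpar i j hVi hpar]
      exact hilt
    · -- balanced
      intro i hiB hVi
      by_contra hnbi
      have hiU : i ∈ U := Finset.mem_filter.2 ⟨Finset.mem_univ _, hVi, hnbi⟩
      have h1 := hmax i hiU
      have h2 := (Finset.mem_filter.1 hiB).2
      linarith
  have hsum_univ : ∀ ψ' : E →ₗ[ℝ] ℝ, DP.imb ψ' V =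
      ∑ j ∈ S, DP.sg (ψ' (V j)) + ∑ j ∈ B, DP.sg (ψ' (V j))
        + ∑ j ∈ Lw, DP.sg (ψ' (V j)) := by
    intro ψ'
    unfold DP.imb
    rw [← Finset.sum_add_sum_compl S (fun j => DP.sg (ψ' (V j)))]
    rw [← Finset.sum_filter_add_sum_filter_not Sᶜ (fun j => r istar < r j)
      (fun j => DP.sg (ψ' (V j)))]
    ring
  have himbφ : (disc V : ℤ) = c + ∑ j ∈ Lw, DP.sg (φ (V j)) := by
    rw [← hφmax, hsum_univ φ, hBsum φ, ← hcdef]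
    ring
  have himbψ : DP.imb ψ V = ∑ j ∈ Lw, DP.sg (φ (V j)) := by
    rw [hsum_univ ψ, hBsum ψ]
    have h1 : ∑ j ∈ S, DP.sg (ψ (V j)) = 0 :=
      Finset.sum_eq_zero fun j hj => by rw [hψS j hj, DP.sg_zero]
    have h2 : ∑ j ∈ Lw, DP.sg (ψ (V j)) = ∑ j ∈ Lw, DP.sg (φ (V j)) := by
      refine Finset.sum_congr rfl fun j hj => ?_
      rw [hψC j (Finset.mem_compl.1 (Finset.mem_filter.1 hj).1)]
      rw [DP.sg_mul, DP.sg_pos (show (0:ℝ) < r istar - r j by have := hLwlt j hj; linarith), mul_one]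
    rw [h1, h2]
    ring
  have hc1 : 1 ≤ c := by
    have hle := DP.imb_le_disc ψ V
    rw [himbψ] at hle
    omega
  -- (1) disc of the subfamily equals c.natAbs
  have hsubsum : ∀ φ' : E →ₗ[ℝ] ℝ, DP.imb φ' (subfam V S) = ∑ j ∈ S, DP.sg (φ' (V j)) := by
    intro φ'
    exact (Finset.sum_subtype S (fun x => Iff.rfl) (fun j => DP.sg (φ' (V j)))).symm
  have hc2 : c = ∑ j ∈ DP.cls V istar, DP.sg (φ (V j)) := by rw [hcdef, hsumS φ]
  have hcases : ∀ φ' : E →ₗ[ℝ] ℝ, DP.imb φ' (subfam V S) = 0 ∨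
      DP.imb φ' (subfam V S) = c ∨ DP.imb φ' (subfam V S) = -c := by
    intro φ'
    rw [hsubsum φ', hsumS φ', hc2]
    exact DP.clsSum_cases V istar φ φ' (fun _ => hφd)
  have hdsub : disc (subfam V S) = c.natAbs := by
    apply le_antisymm
    · apply csSup_le (DP.discSet_nonempty _)
      intro k hk
      obtain ⟨φ', hkeq⟩ := hk
      rw [hkeq, ← DP.imb_eq_counts]
      rcases hcases φ' with h | h | h <;> rw [h] <;> omega
    · apply le_csSup (DP.discSet_bdd _)
      refine ⟨φ, ?_⟩
      rw [← DP.imb_eq_counts, hsubsum φ, ← hcdef]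
  -- (2) lower bound for disc of the contraction
  have hker : Submodule.span ℝ (V '' (↑S : Set ι)) ≤ LinearMap.ker ψ := by
    intro x hx
    rw [LinearMap.mem_ker]
    exact hψspan x (hspan ▸ hx)
  set ψbar := Submodule.liftQ _ ψ hker with hψbardef
  have hcontrsum : ∀ χ' : (E ⧸ Submodule.span ℝ (V '' (↑S : Set ι))) →ₗ[ℝ] ℝ,
      DP.imb χ' (contract V S) = ∑ j ∈ Sᶜ, DP.sg (χ' (Submodule.Quotient.mk (V j))) := by
    intro χ'
    exact (Finset.sum_subtype Sᶜ (fun x => Finset.mem_compl)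
      (fun j => DP.sg (χ' (Submodule.Quotient.mk (V j))))).symm
  have hLwpsi : ∑ j ∈ Lw, DP.sg (ψ (V j)) = ∑ j ∈ Lw, DP.sg (φ (V j)) := by
    refine Finset.sum_congr rfl fun j hj => ?_
    rw [hψC j (Finset.mem_compl.1 (Finset.mem_filter.1 hj).1)]
    rw [DP.sg_mul, DP.sg_pos (show (0:ℝ) < r istar - r j by have := hLwlt j hj; linarith), mul_one]
  have hsumcompl : ∑ j ∈ Sᶜ, DP.sg (ψ (V j)) = (disc V : ℤ) - c := by
    rw [← Finset.sum_filter_add_sum_filter_not Sᶜ (fun j => r istar < r j)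
      (fun j => DP.sg (ψ (V j))), ← hBdef, ← hLwdef, hBsum ψ, hLwpsi]
    omega
  have hlow : (disc V : ℤ) - c ≤ (disc (contract V S) : ℤ) := by
    have h1 : DP.imb ψbar (contract V S) = (disc V : ℤ) - c := by
      rw [hcontrsum ψbar]
      rw [Finset.sum_congr rfl (fun j _ => by
        rw [hψbardef, Submodule.liftQ_apply] : ∀ j ∈ Sᶜ,
          DP.sg (ψbar (Submodule.Quotient.mk (V j))) = DP.sg (ψ (V j)))]
      exact hsumcompl
    have h2 := DP.natAbs_imb_le_disc ψbar (contract V S)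
    omega
  -- (3) upper bound
  obtain ⟨χbar, hχmax, hχgen⟩ := DP.exists_generic_max (contract V S)
  have hχne : ∀ j : {i // i ∉ S}, contract V S j ≠ 0 := by
    intro j h0
    have hmem : V j.1 ∈ Submodule.span ℝ (V '' (↑S : Set ι)) :=
      (Submodule.Quotient.mk_eq_zero _).1 h0
    exact j.2 ((hSmem j.1).2 (hspan ▸ hmem))
  set χ : E →ₗ[ℝ] ℝ := χbar.comp (Submodule.span ℝ (V '' (↑S : Set ι))).mkQ with hχdef
  have hχapp : ∀ x : E, χ x = χbar (Submodule.Quotient.mk x) := by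
    intro x
    rw [hχdef, LinearMap.comp_apply, Submodule.mkQ_apply]
  have hχS : ∀ j ∈ S, χ (V j) = 0 := by
    intro j hj
    rw [hχapp]
    have : (Submodule.Quotient.mk (V j) : E ⧸ Submodule.span ℝ (V '' (↑S : Set ι))) = 0 :=
      (Submodule.Quotient.mk_eq_zero _).2 (hspan ▸ (hSmem j).1 hj)
    rw [this, map_zero]
  have hχC : ∀ j, j ∉ S → χ (V j) ≠ 0 := by
    intro j hj
    rw [hχapp]
    exact hχgen ⟨j, hj⟩ (hχne ⟨j, hj⟩)
  obtain ⟨t, ht, hpres⟩ := DP.exists_perturb V χ φ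
  have himbt : DP.imb (χ + t • φ) V = c + DP.imb χbar (contract V S) := by
    have key : ∀ j, DP.sg ((χ + t • φ) (V j)) =
        if j ∈ S then DP.sg (φ (V j)) else DP.sg (χ (V j)) := by
      intro j
      by_cases hj : j ∈ S
      · rw [if_pos hj]
        have heval : (χ + t • φ) (V j) = t * φ (V j) := by
          simp [LinearMap.add_apply, LinearMap.smul_apply, smul_eq_mul, hχS j hj]
        rw [heval, DP.sg_smul_pos ht]
      · rw [if_neg hj]
        exact hpres j (hχC j hj)
    unfold DP.imb
    rw [Finset.sum_congr rfl (fun j _ => key j)]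
    rw [← Finset.sum_add_sum_compl S
      (fun j => if j ∈ S then DP.sg (φ (V j)) else DP.sg (χ (V j)))]
    have e1 : ∑ j ∈ S, (if j ∈ S then DP.sg (φ (V j)) else DP.sg (χ (V j))) = c := by
      rw [hcdef]
      exact Finset.sum_congr rfl fun j hj => if_pos hj
    have e2 : ∑ j ∈ Sᶜ, (if j ∈ S then DP.sg (φ (V j)) else DP.sg (χ (V j))) =
        DP.imb χbar (contract V S) := by
      rw [hcontrsum χbar]
      refine Finset.sum_congr rfl fun j hj => ?_
      rw [if_neg (Finset.mem_compl.1 hj), hχapp]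
    rw [e1, e2]
    rfl
  have hup : c + (disc (contract V S) : ℤ) ≤ (disc V : ℤ) := by
    have := DP.imb_le_disc (χ + t • φ) V
    rw [himbt, hχmax] at this
    exact this
  have hdc : (disc (contract V S) : ℤ) = (disc V : ℤ) - c := le_antisymm (by omega) hlow
  -- conclusions
  refine ⟨S, ?_, ?_, ?_, ?_⟩
  · intro i h
    exact (hSmem i).2 (hspan ▸ h)
  · unfold confRank
    have hrange : Set.range (subfam V S) = V '' (↑S : Set ι) := by
      ext x
      constructor
      · rintro ⟨⟨i, hi⟩, rfl⟩
        exact ⟨i, hi, rfl⟩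
      · rintro ⟨i, hi, rfl⟩
        exact ⟨⟨i, hi⟩, rfl⟩
    rw [hrange, hspan]
    exact finrank_span_singleton hd0
  · rw [hdsub]
    omega
  · rw [hdsub]
    omega

end
end

section
/- Let V be a vector configuration of rank r in a finite-dimensional real vector space E with dim E ≥ 1. For every integer s with 1 ≤ s ≤ r − 1 there exists a subfamily W of V of rank s that is linearly closed in V and satisfies disc(V) = disc(W) + disc(V/W) and disc(W) ≥ min(disc(V), s). -/
set_option linter.unusedSectionVars false


open scoped Classical

noncomputable section

variable {E : Type*} [AddCommGroup E] [Module ℝ E] {ι : Type*} [Fintype ι]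

namespace DiscAux
open Module Finset

/-- integer sign of a real number -/
def sgnz (a : ℝ) : ℤ := if 0 < a then 1 else if a < 0 then -1 else 0

lemma sgnz_of_pos {a : ℝ} (h : 0 < a) : sgnz a = 1 := by simp [sgnz, h]
lemma sgnz_of_neg {a : ℝ} (h : a < 0) : sgnz a = -1 := by
  simp [sgnz, h, not_lt.2 h.le]
lemma sgnz_zero : sgnz (0:ℝ) = 0 := by simp [sgnz]
lemma sgnz_eq_zero_iff {a : ℝ} : sgnz a = 0 ↔ a = 0 := by
  rcases lt_trichotomy a 0 with h|h|h
  · simp [sgnz_of_neg h, h.ne]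
  · simp [h, sgnz_zero]
  · simp [sgnz_of_pos h, h.ne']
lemma sgnz_neg (a : ℝ) : sgnz (-a) = - sgnz a := by
  rcases lt_trichotomy a 0 with h|h|h
  · rw [sgnz_of_neg h, sgnz_of_pos (by linarith)]; try ring
  · simp [h, sgnz_zero]
  · rw [sgnz_of_pos h, sgnz_of_neg (by linarith)]; try ring
lemma sgnz_mul (a b : ℝ) : sgnz (a * b) = sgnz a * sgnz b := by
  rcases lt_trichotomy a 0 with h|h|h <;> rcases lt_trichotomy b 0 with h'|h'|h'
  · rw [sgnz_of_pos (mul_pos_of_neg_of_neg h h'), sgnz_of_neg h, sgnz_of_neg h']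
    try ring
  · simp [h', sgnz_zero]
  · rw [sgnz_of_neg (mul_neg_of_neg_of_pos h h'), sgnz_of_neg h, sgnz_of_pos h']
    try ring
  · simp [h, sgnz_zero]
  · simp [h, sgnz_zero]
  · simp [h, sgnz_zero]
  · rw [sgnz_of_neg (mul_neg_of_pos_of_neg h h'), sgnz_of_pos h, sgnz_of_neg h']
    try ring
  · simp [h', sgnz_zero]
  · rw [sgnz_of_pos (mul_pos h h'), sgnz_of_pos h, sgnz_of_pos h']
    try ring
lemma sgnz_mul_pos {x a : ℝ} (hx : 0 < x) : sgnz (x * a) = sgnz a := by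
  rw [sgnz_mul, sgnz_of_pos hx, one_mul]
lemma abs_sgnz_le (a : ℝ) : |sgnz a| ≤ 1 := by
  rcases lt_trichotomy a 0 with h|h|h
  · simp [sgnz_of_neg h]
  · simp [h, sgnz_zero]
  · simp [sgnz_of_pos h]

variable {E : Type*} [AddCommGroup E] [Module ℝ E] {ι : Type*} [Fintype ι]

/-- signed count over a finset -/
def dz (V : ι → E) (φ : E →ₗ[ℝ] ℝ) (A : Finset ι) : ℤ := ∑ i ∈ A, sgnz (φ (V i))

lemma dz_neg (V : ι → E) (φ : E →ₗ[ℝ] ℝ) (A : Finset ι) : dz V (-φ) A = - dz V φ A := by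
  simp [dz, sgnz_neg]

lemma dz_congr {V : ι → E} {φ ψ : E →ₗ[ℝ] ℝ} {A : Finset ι}
    (h : ∀ i ∈ A, sgnz (φ (V i)) = sgnz (ψ (V i))) : dz V φ A = dz V ψ A :=
  Finset.sum_congr rfl h

lemma abs_dz_le (V : ι → E) (φ : E →ₗ[ℝ] ℝ) (A : Finset ι) : |dz V φ A| ≤ A.card := by
  calc |dz V φ A| ≤ ∑ i ∈ A, |sgnz (φ (V i))| := Finset.abs_sum_le_sum_abs _ _
  _ ≤ ∑ i ∈ A, 1 := Finset.sum_le_sum fun i _ => abs_sgnz_le _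
  _ = A.card := by simp

lemma dz_union {V : ι → E} {φ : E →ₗ[ℝ] ℝ} {A B : Finset ι} (h : Disjoint A B) :
    dz V φ (A ∪ B) = dz V φ A + dz V φ B := Finset.sum_union h

lemma dz_split (V : ι → E) (φ : E →ₗ[ℝ] ℝ) (A : Finset ι) (p : ι → Prop) :
    dz V φ A = dz V φ (A.filter p) + dz V φ (A.filter fun i => ¬ p i) :=
  (Finset.sum_filter_add_sum_filter_not A p _).symm

lemma dz_eq_counts (V : ι → E) (φ : E →ₗ[ℝ] ℝ) (A : Finset ι) :
    dz V φ A = ((A.filter fun i => 0 < φ (V i)).card : ℤ)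
      - ((A.filter fun i => φ (V i) < 0).card : ℤ) := by
  rw [dz, ← Finset.sum_filter_add_sum_filter_not A (fun i => 0 < φ (V i))]
  have h1 : ∑ i ∈ A.filter (fun i => 0 < φ (V i)), sgnz (φ (V i))
      = ((A.filter fun i => 0 < φ (V i)).card : ℤ) := by
    rw [Finset.sum_congr rfl (fun i hi => sgnz_of_pos (Finset.mem_filter.1 hi).2)]
    simp
  rw [h1, ← Finset.sum_filter_add_sum_filter_not (A.filter fun i => ¬ 0 < φ (V i))
    (fun i => φ (V i) < 0)]
  have h2 : ∑ i ∈ (A.filter fun i => ¬ 0 < φ (V i)).filter (fun i => φ (V i) < 0),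
      sgnz (φ (V i)) = -(((A.filter fun i => φ (V i) < 0)).card : ℤ) := by
    rw [Finset.filter_filter]
    have : (A.filter fun i => ¬ 0 < φ (V i) ∧ φ (V i) < 0) = A.filter fun i => φ (V i) < 0 := by
      apply Finset.filter_congr; intro i _; constructor
      · rintro ⟨-, h⟩; exact h
      · intro h; exact ⟨not_lt.2 h.le, h⟩
    rw [this, Finset.sum_congr rfl (fun i hi => sgnz_of_neg (Finset.mem_filter.1 hi).2)]
    simp
  have h3 : ∑ i ∈ (A.filter fun i => ¬ 0 < φ (V i)).filter (fun i => ¬ φ (V i) < 0),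
      sgnz (φ (V i)) = 0 := by
    apply Finset.sum_eq_zero; intro i hi
    have h := Finset.mem_filter.1 hi
    have h' := Finset.mem_filter.1 h.1
    have : φ (V i) = 0 := le_antisymm (not_lt.1 h'.2) (not_lt.1 h.2)
    simp [this, sgnz_zero]
  rw [h2, h3]; ring


variable {E : Type*} [AddCommGroup E] [Module ℝ E] {ι : Type*} [Fintype ι]

/-- relative discrepancy: max |signed count| over functionals vanishing on `V '' X`,
counting over `Xᶜ`. -/
def DR (V : ι → E) (X : Finset ι) : ℕ :=
  sSup {k | ∃ φ : E →ₗ[ℝ] ℝ, (∀ i ∈ X, φ (V i) = 0) ∧ k = (dz V φ Xᶜ).natAbs}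

lemma DR_set_nonempty (V : ι → E) (X : Finset ι) :
    {k | ∃ φ : E →ₗ[ℝ] ℝ, (∀ i ∈ X, φ (V i) = 0) ∧ k = (dz V φ Xᶜ).natAbs}.Nonempty := by
  refine ⟨(dz V 0 Xᶜ).natAbs, 0, by simp, rfl⟩

lemma DR_set_bdd (V : ι → E) (X : Finset ι) :
    BddAbove {k | ∃ φ : E →ₗ[ℝ] ℝ, (∀ i ∈ X, φ (V i) = 0) ∧ k = (dz V φ Xᶜ).natAbs} := by
  refine ⟨Fintype.card ι, fun k hk => ?_⟩
  obtain ⟨φ, -, rfl⟩ := hk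
  have h1 := abs_dz_le V φ Xᶜ
  have h2 : (Xᶜ.card : ℤ) ≤ Fintype.card ι := by
    exact_mod_cast Finset.card_le_univ _
  rw [Int.abs_eq_natAbs] at h1
  exact_mod_cast h1.trans h2

lemma le_DR {V : ι → E} {X : Finset ι} {φ : E →ₗ[ℝ] ℝ} (h : ∀ i ∈ X, φ (V i) = 0) :
    (dz V φ Xᶜ).natAbs ≤ DR V X :=
  le_csSup (DR_set_bdd V X) ⟨φ, h, rfl⟩

lemma le_DR' {V : ι → E} {X : Finset ι} {φ : E →ₗ[ℝ] ℝ} (h : ∀ i ∈ X, φ (V i) = 0) :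
    dz V φ Xᶜ ≤ (DR V X : ℤ) :=
  le_trans (Int.le_natAbs) (by exact_mod_cast le_DR h)

lemma DR_attained (V : ι → E) (X : Finset ι) :
    ∃ φ : E →ₗ[ℝ] ℝ, (∀ i ∈ X, φ (V i) = 0) ∧ dz V φ Xᶜ = DR V X := by
  obtain ⟨φ, hφ, hk⟩ := Nat.sSup_mem (DR_set_nonempty V X) (DR_set_bdd V X)
  have hDR : DR V X = (dz V φ Xᶜ).natAbs := hk
  rcases Int.natAbs_eq (dz V φ Xᶜ) with h | h
  · exact ⟨φ, hφ, by rw [hDR, ← h]⟩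
  · refine ⟨-φ, fun i hi => by simp [hφ i hi], ?_⟩
    rw [dz_neg, hDR]; omega

/-- perturbation lemma -/
lemma perturb (V : ι → E) (f g : E →ₗ[ℝ] ℝ) :
    ∃ x : ℝ, 0 < x ∧ ∀ i : ι,
      (f (V i) ≠ 0 → sgnz ((f + x • g) (V i)) = sgnz (f (V i))) ∧
      (f (V i) = 0 → (f + x • g) (V i) = x * g (V i)) := by
  have key : ∀ i : ι, ∀ᶠ x : ℝ in nhdsWithin 0 (Set.Ioi 0),
      (f (V i) ≠ 0 → sgnz (f (V i) + x * g (V i)) = sgnz (f (V i))) := by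
    intro i
    rcases lt_trichotomy (f (V i)) 0 with h|h|h
    · have hc : Filter.Tendsto (fun x : ℝ => f (V i) + x * g (V i)) (nhds 0) (nhds (f (V i))) := by
        have : Filter.Tendsto (fun x : ℝ => f (V i) + x * g (V i)) (nhds 0)
            (nhds (f (V i) + 0 * g (V i))) := by
          exact (tendsto_const_nhds.add ((continuous_id.mul continuous_const).tendsto 0))
        simpa using this
      have := (hc.eventually (eventually_lt_nhds h)).filter_mono (nhdsWithin_le_nhds : nhdsWithin (0:ℝ) (Set.Ioi 0) ≤ nhds 0)
      filter_upwards [this] with x hx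
      intro _
      rw [sgnz_of_neg hx, sgnz_of_neg h]
    · filter_upwards with x hx; exact absurd h hx
    · have hc : Filter.Tendsto (fun x : ℝ => f (V i) + x * g (V i)) (nhds 0) (nhds (f (V i))) := by
        have : Filter.Tendsto (fun x : ℝ => f (V i) + x * g (V i)) (nhds 0)
            (nhds (f (V i) + 0 * g (V i))) := by
          exact (tendsto_const_nhds.add ((continuous_id.mul continuous_const).tendsto 0))
        simpa using this
      have := (hc.eventually (eventually_gt_nhds h)).filter_mono (nhdsWithin_le_nhds : nhdsWithin (0:ℝ) (Set.Ioi 0) ≤ nhds 0)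
      filter_upwards [this] with x hx
      intro _
      rw [sgnz_of_pos hx, sgnz_of_pos h]
  have hall : ∀ᶠ x : ℝ in nhdsWithin 0 (Set.Ioi 0),
      ∀ i : ι, (f (V i) ≠ 0 → sgnz (f (V i) + x * g (V i)) = sgnz (f (V i))) :=
    Filter.eventually_all.2 key
  have hmem : ∀ᶠ x : ℝ in nhdsWithin 0 (Set.Ioi 0), x ∈ Set.Ioi (0:ℝ) :=
    eventually_mem_nhdsWithin
  obtain ⟨x, hx1, hx2⟩ := (hall.and hmem).exists
  refine ⟨x, hx2, fun i => ⟨fun h => ?_, fun h => ?_⟩⟩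
  · have : (f + x • g) (V i) = f (V i) + x * g (V i) := by
      simp [LinearMap.add_apply, LinearMap.smul_apply, smul_eq_mul]
    rw [this]; exact hx1 i h
  · simp [LinearMap.add_apply, LinearMap.smul_apply, smul_eq_mul, h]

/-- generic functional vanishing on a submodule and nonzero on a finite set -/
lemma gen_exists [FiniteDimensional ℝ E] (N : Submodule ℝ E) (B : Finset E)
    (hB : ∀ w ∈ B, w ∉ N) :
    ∃ θ : E →ₗ[ℝ] ℝ, (∀ n ∈ N, θ n = 0) ∧ ∀ w ∈ B, θ w ≠ 0 := by
  classical
  induction B using Finset.induction_on with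
  | empty => exact ⟨0, by simp, by simp⟩
  | @insert w B hw ih =>
    obtain ⟨θ, hθN, hθB⟩ := ih (fun v hv => hB v (Finset.mem_insert_of_mem hv))
    have hwN : w ∉ N := hB w (Finset.mem_insert_self w B)
    -- functional vanishing on N, nonzero at w
    have hq : Submodule.Quotient.mk (p := N) w ≠ 0 := by
      simpa [Submodule.Quotient.mk_eq_zero] using hwN
    have : ¬ (∀ ψ : Module.Dual ℝ (E ⧸ N), ψ (Submodule.Quotient.mk w) = 0) := by
      rw [Module.forall_dual_apply_eq_zero_iff]; exact hq
    push_neg at this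
    obtain ⟨ψ, hψ⟩ := this
    set θ₁ : E →ₗ[ℝ] ℝ := ψ.comp N.mkQ with hθ₁def
    have hθ₁N : ∀ n ∈ N, θ₁ n = 0 := by
      intro n hn
      simp [hθ₁def, (Submodule.Quotient.mk_eq_zero N).2 hn, Submodule.mkQ_apply]
    have hθ₁w : θ₁ w ≠ 0 := hψ
    -- choose c avoiding finitely many bad values
    obtain ⟨c, hc⟩ := Infinite.exists_notMem_finset
      ((insert w B).image fun v => -(θ v) / (θ₁ v))
    refine ⟨θ + c • θ₁, fun n hn => by simp [hθN n hn, hθ₁N n hn], ?_⟩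
    intro v hv
    by_cases h1 : θ₁ v = 0
    · have hvB : v ∈ B := by
        rcases Finset.mem_insert.1 hv with rfl | h; exact absurd h1 hθ₁w; exact h
      simp [h1, hθB v hvB]
    · intro hcon
      apply hc
      refine Finset.mem_image.2 ⟨v, hv, ?_⟩
      have : θ v + c * θ₁ v = 0 := by simpa using hcon
      field_simp
      linarith
  
/-- generic optimal functional -/
lemma exists_generic_optimal [FiniteDimensional ℝ E] (V : ι → E) (X : Finset ι)
    (hsat : ∀ i ∉ X, V i ∉ Submodule.span ℝ (V '' (X : Set ι))) :
    ∃ φ : E →ₗ[ℝ] ℝ, (∀ i ∈ X, φ (V i) = 0) ∧ (∀ i ∉ X, φ (V i) ≠ 0) ∧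
      dz V φ Xᶜ = DR V X := by
  classical
  obtain ⟨φ₀, hφ₀X, hφ₀dz⟩ := DR_attained V X
  obtain ⟨θ, hθN, hθB⟩ := gen_exists (Submodule.span ℝ (V '' (X : Set ι)))
    (Xᶜ.image V) (by
      intro w hw
      obtain ⟨i, hi, rfl⟩ := Finset.mem_image.1 hw
      exact hsat i (Finset.mem_compl.1 hi))
  have hθX : ∀ i ∈ X, θ (V i) = 0 := fun i hi =>
    hθN _ (Submodule.subset_span ⟨i, by simpa using hi, rfl⟩)
  have hθne : ∀ i ∉ X, θ (V i) ≠ 0 := fun i hi =>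
    hθB _ (Finset.mem_image_of_mem V (Finset.mem_compl.2 hi))
  set Az := Xᶜ.filter (fun i => φ₀ (V i) = 0) with hAz
  have hsplit : ∀ ψ : E →ₗ[ℝ] ℝ, dz V ψ Xᶜ
      = dz V ψ (Xᶜ.filter (fun i => ¬ φ₀ (V i) = 0)) + dz V ψ Az := by
    intro ψ
    rw [hAz, dz, dz, dz, add_comm, Finset.sum_filter_add_sum_filter_not]
  have main : ∀ g : E →ₗ[ℝ] ℝ, (∀ i ∉ X, g (V i) ≠ 0) → (∀ i ∈ X, g (V i) = 0) →
      ∃ φ : E →ₗ[ℝ] ℝ, (∀ i ∈ X, φ (V i) = 0) ∧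
        dz V φ Xᶜ = (DR V X : ℤ) + dz V g Az ∧
        (∀ i ∈ Xᶜ, sgnz (φ (V i)) = if φ₀ (V i) = 0 then sgnz (g (V i)) else sgnz (φ₀ (V i))) := by
    intro g hgne hgX
    obtain ⟨x, hx, hP⟩ := perturb V φ₀ g
    refine ⟨φ₀ + x • g, fun i hi => by simp [hφ₀X i hi, hgX i hi], ?_, ?_⟩
    · rw [hsplit]
      have h1 : dz V (φ₀ + x • g) (Xᶜ.filter (fun i => ¬ φ₀ (V i) = 0))
          = dz V φ₀ (Xᶜ.filter (fun i => ¬ φ₀ (V i) = 0)) := by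
        apply dz_congr; intro i hi
        exact (hP i).1 (Finset.mem_filter.1 hi).2
      have h2 : dz V (φ₀ + x • g) Az = dz V g Az := by
        apply dz_congr; intro i hi
        have h := (hP i).2 (Finset.mem_filter.1 hi).2
        rw [h, sgnz_mul_pos hx]
      have h3 : dz V φ₀ (Xᶜ.filter (fun i => ¬ φ₀ (V i) = 0)) = (DR V X : ℤ) := by
        rw [← hφ₀dz, hsplit φ₀]
        have : dz V φ₀ Az = 0 := by
          apply Finset.sum_eq_zero; intro i hi
          rw [(Finset.mem_filter.1 hi).2, sgnz_zero]
        rw [this, add_zero]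
      rw [h1, h2, h3]
    · intro i hi
      by_cases h : φ₀ (V i) = 0
      · rw [if_pos h, (hP i).2 h, sgnz_mul_pos hx]
      · rw [if_neg h, (hP i).1 h]
  obtain ⟨φp, hφpX, hφpdz, hφpsgn⟩ := main θ hθne hθX
  obtain ⟨φm, hφmX, hφmdz, -⟩ := main (-θ) (fun i hi => by simp [hθne i hi])
    (fun i hi => by simp [hθX i hi])
  have hdzneg : dz V (-θ) Az = - dz V θ Az := dz_neg V θ Az
  have hb1 : dz V φp Xᶜ ≤ (DR V X : ℤ) := le_DR' hφpX
  have hb2 : dz V φm Xᶜ ≤ (DR V X : ℤ) := le_DR' hφmX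
  have hzero : dz V θ Az = 0 := by
    rw [hφpdz] at hb1; rw [hφmdz, hdzneg] at hb2; omega
  refine ⟨φp, hφpX, ?_, ?_⟩
  · intro i hi
    have hsg := hφpsgn i (Finset.mem_compl.2 hi)
    by_cases h : φ₀ (V i) = 0
    · rw [if_pos h] at hsg
      intro hcon
      exact hθne i hi (sgnz_eq_zero_iff.1 (by rw [← hsg, hcon, sgnz_zero]))
    · rw [if_neg h] at hsg
      intro hcon
      exact h (sgnz_eq_zero_iff.1 (by rw [← hsg, hcon, sgnz_zero]))
  · rw [hφpdz, hzero, add_zero]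


/-- span of image -/
def NN (V : ι → E) (X : Finset ι) : Submodule ℝ E := Submodule.span ℝ (V '' (X : Set ι))

lemma mem_NN_of_mem {V : ι → E} {X : Finset ι} {i : ι} (hi : i ∈ X) : V i ∈ NN V X :=
  Submodule.subset_span ⟨i, by simpa using hi, rfl⟩

lemma NN_mono {V : ι → E} {X Y : Finset ι} (h : X ⊆ Y) : NN V X ≤ NN V Y :=
  Submodule.span_mono (Set.image_mono (by exact_mod_cast h))

lemma vanish_NN {V : ι → E} {X : Finset ι} {φ : E →ₗ[ℝ] ℝ} (h : ∀ i ∈ X, φ (V i) = 0) :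
    ∀ v ∈ NN V X, φ v = 0 := by
  intro v hv
  have hsub : V '' (X : Set ι) ⊆ (LinearMap.ker φ : Set E) := by
    rintro w ⟨i, hi, rfl⟩
    simpa [LinearMap.mem_ker] using h i (by simpa using hi)
  exact (Submodule.span_le.2 hsub) hv

lemma line_closure [FiniteDimensional ℝ E] (V : ι → E) (X : Finset ι)
    (hsat : ∀ i ∉ X, V i ∉ NN V X) {j : ι} (hjX : j ∉ X) :
    j ∈ Xᶜ.filter (fun i => V i ∈ NN V X ⊔ Submodule.span ℝ {V j}) ∧
    Disjoint (Xᶜ.filter (fun i => V i ∈ NN V X ⊔ Submodule.span ℝ {V j})) X ∧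
    NN V (X ∪ Xᶜ.filter (fun i => V i ∈ NN V X ⊔ Submodule.span ℝ {V j}))
      = NN V X ⊔ Submodule.span ℝ {V j} ∧
    (∀ i ∉ X ∪ Xᶜ.filter (fun i => V i ∈ NN V X ⊔ Submodule.span ℝ {V j}),
      V i ∉ NN V (X ∪ Xᶜ.filter (fun i => V i ∈ NN V X ⊔ Submodule.span ℝ {V j}))) ∧
    finrank ℝ (NN V (X ∪ Xᶜ.filter (fun i => V i ∈ NN V X ⊔ Submodule.span ℝ {V j})))
      = finrank ℝ (NN V X) + 1 := by
  classical
  set T := Xᶜ.filter (fun i => V i ∈ NN V X ⊔ Submodule.span ℝ {V j}) with hT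
  have hjN : V j ∉ NN V X := hsat j hjX
  have hjT : j ∈ T := by
    refine Finset.mem_filter.2 ⟨Finset.mem_compl.2 hjX, ?_⟩
    exact Submodule.mem_sup_right (Submodule.mem_span_singleton_self _)
  have hdisj : Disjoint T X := by
    rw [Finset.disjoint_left]
    intro i hiT
    exact Finset.mem_compl.1 (Finset.mem_filter.1 hiT).1
  have hspan : NN V (X ∪ T) = NN V X ⊔ Submodule.span ℝ {V j} := by
    apply le_antisymm
    · rw [NN, Submodule.span_le]
      rintro w ⟨i, hi, rfl⟩
      rcases Finset.mem_union.1 (by simpa using hi) with h | h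
      · exact Submodule.mem_sup_left (mem_NN_of_mem h)
      · exact (Finset.mem_filter.1 h).2
    · refine sup_le (NN_mono Finset.subset_union_left) ?_
      rw [Submodule.span_le, Set.singleton_subset_iff]
      exact mem_NN_of_mem (Finset.mem_union_right _ hjT)
  have hsat' : ∀ i ∉ X ∪ T, V i ∉ NN V (X ∪ T) := by
    intro i hi hcon
    rw [hspan] at hcon
    have hiX : i ∉ X := fun h => hi (Finset.mem_union_left _ h)
    exact hi (Finset.mem_union_right _ (Finset.mem_filter.2 ⟨Finset.mem_compl.2 hiX, hcon⟩))
  refine ⟨hjT, hdisj, hspan, hsat', ?_⟩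
  rw [hspan]
  have hVj : V j ≠ 0 := fun h => hjN (h ▸ (NN V X).zero_mem)
  have hinf : NN V X ⊓ Submodule.span ℝ {V j} = ⊥ := by
    rw [eq_bot_iff]
    rintro x ⟨hx1, hx2⟩
    obtain ⟨c, rfl⟩ := Submodule.mem_span_singleton.1 hx2
    rcases eq_or_ne c 0 with rfl | hc
    · simp
    · have h' := (NN V X).smul_mem c⁻¹ hx1
      rw [smul_smul, inv_mul_cancel₀ hc, one_smul] at h'
      exact absurd h' hjN
  have := Submodule.finrank_sup_add_finrank_inf_eq (NN V X) (Submodule.span ℝ {V j})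
  rw [hinf, finrank_span_singleton hVj] at this
  simpa using this

set_option maxHeartbeats 1000000 in
lemma big_M [FiniteDimensional ℝ E] (V : ι → E) : ∀ (s : ℕ) (X : Finset ι),
    (∀ i ∉ X, V i ∉ NN V X) →
    (finrank ℝ (NN V X) + s ≤ confRank V) →
    ∃ (S : Finset ι) (α : E →ₗ[ℝ] ℝ),
      Disjoint S X ∧
      (∀ i ∉ X, V i ∈ NN V (X ∪ S) → i ∈ S) ∧
      finrank ℝ (NN V (X ∪ S)) = finrank ℝ (NN V X) + s ∧
      (∀ i ∈ X, α (V i) = 0) ∧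
      (∀ i ∈ S, α (V i) ≠ 0) ∧
      ((min (DR V X) s : ℕ) : ℤ) ≤ dz V α S ∧
      (DR V X : ℤ) ≤ dz V α S + DR V (X ∪ S) := by
  intro s
  induction s with
  | zero =>
    intro X hsat hrank
    refine ⟨∅, 0, Finset.disjoint_empty_left _, ?_, by rw [Finset.union_empty]; ring, by simp,
      by simp, by simp [dz], ?_⟩
    · intro i hiX hmem
      rw [Finset.union_empty] at hmem
      exact absurd hmem (hsat i hiX)
    · rw [Finset.union_empty]
      simp [dz]
  | succ s ih =>
    intro X hsat hrank
    have hout : ∃ j, j ∉ X ∧ V j ∉ NN V X := by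
      by_contra hcon
      push_neg at hcon
      have hall : ∀ i, V i ∈ NN V X := by
        intro i
        by_cases h : i ∈ X
        · exact mem_NN_of_mem h
        · exact hcon i h
      have hle : Submodule.span ℝ (Set.range V) ≤ NN V X := by
        rw [Submodule.span_le]
        rintro w ⟨i, rfl⟩
        exact hall i
      have := Submodule.finrank_mono hle
      rw [confRank] at hrank
      omega
    rcases Nat.eq_zero_or_pos (DR V X) with hD0 | hD1
    · -- BRANCH 3 : DR V X = 0
      obtain ⟨j, hjX, hjN⟩ := hout
      obtain ⟨hjT, hdisjT, hspanT, hsatT, hrkT⟩ := line_closure V X hsat hjX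
      set T := Xᶜ.filter (fun i => V i ∈ NN V X ⊔ Submodule.span ℝ {V j}) with hTdef
      have hrank' : finrank ℝ (NN V (X ∪ T)) + s ≤ confRank V := by
        rw [hrkT]; omega
      obtain ⟨S₁, α₁, o1, o2, o3, o4, o5, o6, o7⟩ := ih (X ∪ T) hsatT hrank'
      -- generic functional on Xᶜ
      obtain ⟨θ, hθN, hθB⟩ := gen_exists (NN V X) (Xᶜ.image V) (by
        intro w hw
        obtain ⟨i, hi, rfl⟩ := Finset.mem_image.1 hw
        exact hsat i (Finset.mem_compl.1 hi))
      have hθX : ∀ i ∈ X, θ (V i) = 0 := fun i hi => hθN _ (mem_NN_of_mem hi)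
      have hθne : ∀ i ∉ X, θ (V i) ≠ 0 := fun i hi =>
        hθB _ (Finset.mem_image_of_mem V (Finset.mem_compl.2 hi))
      set c : ℝ := if 0 ≤ dz V θ T then 1 else -1 with hcdef
      have hc : c = 1 ∨ c = -1 := by rw [hcdef]; split <;> simp
      have hcne : c ≠ 0 := by rcases hc with h|h <;> rw [h] <;> norm_num
      obtain ⟨x, hx, hP⟩ := perturb V α₁ (c • θ)
      set α : E →ₗ[ℝ] ℝ := α₁ + x • (c • θ) with hαdef
      have hTX : ∀ i ∈ T, i ∉ X := fun i hi => Finset.mem_compl.1 (Finset.mem_filter.1 hi).1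
      have hα₁T : ∀ i ∈ T, α₁ (V i) = 0 := fun i hi => o4 i (Finset.mem_union_right _ hi)
      have hαT : ∀ i ∈ T, α (V i) = x * (c * θ (V i)) := by
        intro i hi
        have := (hP i).2 (hα₁T i hi)
        simpa using this
      have hdisjTS : Disjoint T S₁ := by
        rw [Finset.disjoint_right]
        intro i hiS hiT
        exact (Finset.disjoint_left.1 o1) hiS (Finset.mem_union_right _ hiT)
      have hdzT : 0 ≤ dz V α T := by
        have hcongr : dz V α T = ∑ i ∈ T, (sgnz c * sgnz (θ (V i))) := by
          rw [dz]
          refine Finset.sum_congr rfl (fun i hi => ?_)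
          rw [hαT i hi, sgnz_mul_pos hx, sgnz_mul]
        rw [hcongr, ← Finset.mul_sum]
        rcases le_or_gt 0 (dz V θ T) with h | h
        · have : c = 1 := by rw [hcdef, if_pos h]
          rw [this, sgnz_of_pos one_pos, one_mul]
          exact h
        · have : c = -1 := by rw [hcdef, if_neg (not_le.2 h)]
          rw [this, sgnz_of_neg (by norm_num : (-1:ℝ) < 0)]
          have : (∑ i ∈ T, sgnz (θ (V i))) = dz V θ T := rfl
          rw [this]
          omega
      have hdzS₁ : dz V α S₁ = dz V α₁ S₁ := by
        refine dz_congr (fun i hi => ?_)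
        exact (hP i).1 (o5 i hi)
      have hA₁ : (0:ℤ) ≤ dz V α₁ S₁ := le_trans (by positivity) o6
      refine ⟨T ∪ S₁, α, ?_, ?_, ?_, ?_, ?_, ?_, ?_⟩
      · rw [Finset.disjoint_union_left]
        exact ⟨hdisjT, Finset.disjoint_left.2 (fun i hi hi' =>
          (Finset.disjoint_left.1 o1) hi (Finset.mem_union_left _ hi'))⟩
      · intro i hiX hmem
        rw [← Finset.union_assoc] at hmem
        by_cases hiT : i ∈ T
        · exact Finset.mem_union_left _ hiT
        · have : i ∉ X ∪ T := by
            rw [Finset.mem_union]; tauto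
          exact Finset.mem_union_right _ (o2 i this hmem)
      · rw [← Finset.union_assoc, o3, hrkT]; omega
      · intro i hi
        have h1 : α₁ (V i) = 0 := o4 i (Finset.mem_union_left _ hi)
        have h2 : θ (V i) = 0 := hθX i hi
        rw [hαdef]
        simp [h1, h2]
      · intro i hi
        rcases Finset.mem_union.1 hi with h | h
        · rw [hαT i h]
          exact mul_ne_zero (ne_of_gt hx) (mul_ne_zero hcne (hθne i (hTX i h)))
        · intro hcon
          have := (hP i).1 (o5 i h)
          rw [hcon, sgnz_zero] at this
          exact o5 i h (sgnz_eq_zero_iff.1 this.symm)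
      · have hsplit : dz V α (T ∪ S₁) = dz V α T + dz V α S₁ := dz_union hdisjTS
        have hmin : ((min (DR V X) (s+1) : ℕ) : ℤ) ≤ 0 := by rw [hD0]; simp
        rw [hsplit, hdzS₁]
        omega
      · have hsplit : dz V α (T ∪ S₁) = dz V α T + dz V α S₁ := dz_union hdisjTS
        have h1 : (0:ℤ) ≤ DR V (X ∪ (T ∪ S₁)) := by positivity
        have h2 : (DR V X : ℤ) = 0 := by rw [hD0]; rfl
        rw [hsplit, hdzS₁]
        omega
    · -- BRANCH 4 : 1 ≤ DR V X
      obtain ⟨φ, hφX, hφne, hφdz⟩ := exists_generic_optimal V X hsat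
      have hφN : ∀ v ∈ NN V X, φ v = 0 := vanish_NN hφX
      set B : Finset E := (Xᶜ.image V) ∪
        (((Xᶜ ×ˢ Xᶜ).filter fun p => V p.2 ∉ NN V X ⊔ Submodule.span ℝ {V p.1}).image
          fun p => φ (V p.1) • V p.2 - φ (V p.2) • V p.1) with hBdef
      have hB : ∀ w ∈ B, w ∉ NN V X := by
        intro w hw
        rcases Finset.mem_union.1 hw with hw | hw
        · obtain ⟨i, hi, rfl⟩ := Finset.mem_image.1 hw
          exact hsat i (Finset.mem_compl.1 hi)
        · obtain ⟨p, hp, rfl⟩ := Finset.mem_image.1 hw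
          obtain ⟨hmem, hcond⟩ := Finset.mem_filter.1 hp
          have hi1 : p.1 ∈ Xᶜ := (Finset.mem_product.1 hmem).1
          intro hcon
          apply hcond
          have hφ1 : φ (V p.1) ≠ 0 := hφne p.1 (Finset.mem_compl.1 hi1)
          have hkey : φ (V p.1) • V p.2 ∈ NN V X ⊔ Submodule.span ℝ {V p.1} := by
            have h1 : φ (V p.1) • V p.2 - φ (V p.2) • V p.1
                ∈ NN V X ⊔ Submodule.span ℝ {V p.1} := Submodule.mem_sup_left hcon
            have h2 : φ (V p.2) • V p.1 ∈ NN V X ⊔ Submodule.span ℝ {V p.1} :=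
              Submodule.mem_sup_right
                (Submodule.smul_mem _ _ (Submodule.mem_span_singleton_self _))
            have := Submodule.add_mem _ h1 h2
            simpa using this
          have := Submodule.smul_mem _ (φ (V p.1))⁻¹ hkey
          rwa [smul_smul, inv_mul_cancel₀ hφ1, one_smul] at this
      obtain ⟨θ₀, hθ₀N, hθ₀B⟩ := gen_exists (NN V X) B hB
      have hθ₀ne : ∀ i ∉ X, θ₀ (V i) ≠ 0 := fun i hi =>
        hθ₀B _ (Finset.mem_union_left _ (Finset.mem_image_of_mem V (Finset.mem_compl.2 hi)))
      set x₀ : ι → ℝ := fun i => φ (V i) / θ₀ (V i) with hx₀def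
      have hfib : ∃ i₀ ∈ Xᶜ, dz V φ (Xᶜ.filter fun i' => x₀ i' = x₀ i₀) ≠ 0 := by
        by_contra hcon
        push_neg at hcon
        have hmap : ∀ i ∈ Xᶜ, x₀ i ∈ Xᶜ.image x₀ := fun i hi => Finset.mem_image_of_mem _ hi
        have hsum := Finset.sum_fiberwise_of_maps_to hmap (fun i => sgnz (φ (V i)))
        have h0 : dz V φ Xᶜ = 0 := by
          rw [dz, ← hsum]
          refine Finset.sum_eq_zero (fun t ht => ?_)
          obtain ⟨i₀, hi₀, rfl⟩ := Finset.mem_image.1 ht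
          exact hcon i₀ hi₀
        rw [hφdz] at h0
        omega
      obtain ⟨i₀, hi₀c, hi₀dz⟩ := hfib
      have hi₀X : i₀ ∉ X := Finset.mem_compl.1 hi₀c
      have hx₀ne : x₀ i₀ ≠ 0 := div_ne_zero (hφne i₀ hi₀X) (hθ₀ne i₀ hi₀X)
      set σ : ℝ := if 0 < x₀ i₀ then 1 else -1 with hσdef
      have hσ : σ = 1 ∨ σ = -1 := by rw [hσdef]; split <;> simp
      have hσne : σ ≠ 0 := by rcases hσ with h|h <;> rw [h] <;> norm_num
      set θ : E →ₗ[ℝ] ℝ := σ • θ₀ with hθdef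
      have hθap : ∀ v, θ v = σ * θ₀ v := fun v => rfl
      have hθne : ∀ i ∉ X, θ (V i) ≠ 0 := fun i hi => by
        rw [hθap]; exact mul_ne_zero hσne (hθ₀ne i hi)
      have hθN : ∀ v ∈ NN V X, θ v = 0 := fun v hv => by rw [hθap, hθ₀N v hv, mul_zero]
      have hθX : ∀ i ∈ X, θ (V i) = 0 := fun i hi => hθN _ (mem_NN_of_mem hi)
      set xt : ι → ℝ := fun i => φ (V i) / θ (V i) with hxtdef
      have hxtσ : ∀ i, xt i = σ * x₀ i := by
        intro i
        show φ (V i) / (σ * θ₀ (V i)) = σ * (φ (V i) / θ₀ (V i))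
        rcases hσ with h|h <;> rw [h]
        · simp
        · rw [show φ (V i) / (-1 * θ₀ (V i)) = -(φ (V i) / θ₀ (V i)) by
            rw [neg_one_mul, div_neg]]
          ring
      have hxt_pos : 0 < xt i₀ := by
        rw [hxtσ]
        rcases lt_trichotomy (x₀ i₀) 0 with h|h|h
        · have hs : σ = -1 := by rw [hσdef, if_neg (not_lt.2 h.le)]
          rw [hs]; linarith
        · exact absurd h hx₀ne
        · have hs : σ = 1 := by rw [hσdef, if_pos h]
          rw [hs]; linarith
      have hfibeq : ∀ i₁ : ι, (Xᶜ.filter fun i' => xt i' = xt i₁)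
          = (Xᶜ.filter fun i' => x₀ i' = x₀ i₁) := by
        intro i₁
        refine Finset.filter_congr (fun i _ => ?_)
        rw [hxtσ, hxtσ]
        constructor
        · exact fun h => mul_left_cancel₀ hσne h
        · intro h; rw [h]
      have hi₀dz' : dz V φ (Xᶜ.filter fun i' => xt i' = xt i₀) ≠ 0 := by
        rw [hfibeq]; exact hi₀dz
      have hxkey : ∀ i ∉ X, φ (V i) = θ (V i) * xt i := by
        intro i hi
        show φ (V i) = θ (V i) * (φ (V i) / θ (V i))
        rw [mul_comm, div_mul_cancel₀ _ (hθne i hi)]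
      have hxne : ∀ i ∉ X, xt i ≠ 0 := fun i hi => div_ne_zero (hφne i hi) (hθne i hi)
      set TS : Finset ι := Xᶜ.filter
        (fun i => 0 < xt i ∧ dz V φ (Xᶜ.filter fun i' => xt i' = xt i) ≠ 0) with hTSdef
      have hi₀TS : i₀ ∈ TS := Finset.mem_filter.2 ⟨hi₀c, hxt_pos, hi₀dz'⟩
      have hTSne : (TS.image xt).Nonempty := ⟨xt i₀, Finset.mem_image_of_mem xt hi₀TS⟩
      set xstar : ℝ := (TS.image xt).min' hTSne with hxsdef
      have hxsmem := (TS.image xt).min'_mem hTSne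
      obtain ⟨j, hjTS, hjx⟩ := Finset.mem_image.1 hxsmem
      rw [← hxsdef] at hjx
      obtain ⟨hjc, hjpos, hjdz⟩ := Finset.mem_filter.1 hjTS
      have hjX : j ∉ X := Finset.mem_compl.1 hjc
      set T : Finset ι := Xᶜ.filter (fun i => xt i = xt j) with hTdef
      have hjT : j ∈ T := Finset.mem_filter.2 ⟨hjc, rfl⟩
      have hεne : dz V φ T ≠ 0 := hjdz
      have hTspan : T = Xᶜ.filter (fun i => V i ∈ NN V X ⊔ Submodule.span ℝ {V j}) := by
        ext i
        simp only [hTdef, Finset.mem_filter]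
        constructor
        · rintro ⟨hic, hxi⟩
          refine ⟨hic, ?_⟩
          by_contra hcon
          have hpB : φ (V j) • V i - φ (V i) • V j ∈ B := by
            rw [hBdef]
            refine Finset.mem_union_right _ (Finset.mem_image.2 ⟨(j, i), ?_, rfl⟩)
            exact Finset.mem_filter.2 ⟨Finset.mem_product.2 ⟨hjc, hic⟩, hcon⟩
          have hne := hθ₀B _ hpB
          apply hne
          have hiX' : i ∉ X := Finset.mem_compl.1 hic
          have e1 : φ (V i) = θ (V i) * xt i := hxkey i hiX'
          have e2 : φ (V j) = θ (V j) * xt j := hxkey j hjX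
          have hcalc : θ₀ (φ (V j) • V i - φ (V i) • V j)
              = φ (V j) * θ₀ (V i) - φ (V i) * θ₀ (V j) := by
            simp [map_sub, map_smul, smul_eq_mul]
          rw [hcalc]
          have hθ₀i : θ (V i) = σ * θ₀ (V i) := rfl
          have hθ₀j : θ (V j) = σ * θ₀ (V j) := rfl
          have hmain : σ * (φ (V j) * θ₀ (V i) - φ (V i) * θ₀ (V j)) = 0 := by
            have hz : φ (V j) * θ (V i) - φ (V i) * θ (V j) = 0 := by
              rw [e1, e2, hxi]; ring
            calc σ * (φ (V j) * θ₀ (V i) - φ (V i) * θ₀ (V j))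
                = φ (V j) * (σ * θ₀ (V i)) - φ (V i) * (σ * θ₀ (V j)) := by ring
              _ = φ (V j) * θ (V i) - φ (V i) * θ (V j) := by rw [← hθ₀i, ← hθ₀j]
              _ = 0 := hz
          exact (mul_eq_zero.1 hmain).resolve_left hσne
        · rintro ⟨hic, hmem⟩
          refine ⟨hic, ?_⟩
          have hiX' : i ∉ X := Finset.mem_compl.1 hic
          obtain ⟨y, hy, z, hz, hsum⟩ := Submodule.mem_sup.1 hmem
          obtain ⟨cc, rfl⟩ := Submodule.mem_span_singleton.1 hz
          have hcc : cc ≠ 0 := by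
            rintro rfl
            rw [zero_smul, add_zero] at hsum
            exact hsat i hiX' (hsum ▸ hy)
          have hφi : φ (V i) = cc * φ (V j) := by
            rw [← hsum, map_add, hφN _ hy, map_smul, smul_eq_mul, zero_add]
          have hθi : θ (V i) = cc * θ (V j) := by
            rw [← hsum, map_add, hθN _ hy, map_smul, smul_eq_mul, zero_add]
          show φ (V i) / θ (V i) = φ (V j) / θ (V j)
          rw [hφi, hθi, mul_div_mul_left _ _ hcc]
      obtain ⟨hjT', hdisjT, hspanT, hsatT, hrkT⟩ := line_closure V X hsat hjX
      rw [← hTspan] at hdisjT hspanT hsatT hrkT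
      set ψ : E →ₗ[ℝ] ℝ := φ - xstar • θ with hψdef
      have hψap : ∀ v, ψ v = φ v - xstar * θ v := fun v => rfl
      have hψ0 : ∀ i ∈ X ∪ T, ψ (V i) = 0 := by
        intro i hi
        rcases Finset.mem_union.1 hi with h | h
        · rw [hψap, hφX i h, hθX i h]; ring
        · obtain ⟨hic, hxi⟩ := Finset.mem_filter.1 h
          have hiX' : i ∉ X := Finset.mem_compl.1 hic
          rw [hψap, hxkey i hiX', hxi, ← hjx]; ring
      have hsgnφ : ∀ i ∉ X, sgnz (φ (V i)) = sgnz (θ (V i)) * sgnz (xt i) := by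
        intro i hi; rw [hxkey i hi, sgnz_mul]
      have hsgnψ : ∀ i ∉ X, sgnz (ψ (V i)) = sgnz (θ (V i)) * sgnz (xt i - xstar) := by
        intro i hi
        have hcalc : ψ (V i) = θ (V i) * (xt i - xstar) := by
          rw [hψap, hxkey i hi]; ring
        rw [hcalc, sgnz_mul]
      set C : Finset ι := Xᶜ.filter (fun i => 0 < xt i ∧ xt i < xstar) with hCdef
      have hCzero : dz V φ C = 0 := by
        have hmap : ∀ i ∈ C, xt i ∈ C.image xt := fun i hi => Finset.mem_image_of_mem xt hi
        have hsum := Finset.sum_fiberwise_of_maps_to hmap (fun i => sgnz (φ (V i)))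
        rw [dz, ← hsum]
        refine Finset.sum_eq_zero (fun t ht => ?_)
        obtain ⟨i₁, hi₁C, rfl⟩ := Finset.mem_image.1 ht
        obtain ⟨hi₁c, hi₁pos, hi₁lt⟩ := Finset.mem_filter.1 hi₁C
        have hfull : C.filter (fun i => xt i = xt i₁) = Xᶜ.filter (fun i => xt i = xt i₁) := by
          ext i
          simp only [hCdef, Finset.mem_filter]
          constructor
          · rintro ⟨⟨h1, h2⟩, h3⟩; exact ⟨h1, h3⟩
          · rintro ⟨h1, h3⟩
            exact ⟨⟨h1, by rw [h3]; exact ⟨hi₁pos, hi₁lt⟩⟩, h3⟩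
        rw [hfull]
        by_contra hne
        have hi₁TS : i₁ ∈ TS := Finset.mem_filter.2 ⟨hi₁c, hi₁pos, hne⟩
        have hle := Finset.min'_le (TS.image xt) _ (Finset.mem_image_of_mem xt hi₁TS)
        rw [← hxsdef] at hle
        exact absurd hi₁lt (not_lt.2 hle)
      have hTdisj2 : Disjoint T ((X ∪ T)ᶜ) := by
        rw [Finset.disjoint_left]; intro i hiT hic
        exact (Finset.mem_compl.1 hic) (Finset.mem_union_right _ hiT)
      have hXdecomp : Xᶜ = T ∪ (X ∪ T)ᶜ := by
        ext i
        constructor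
        · intro hi
          by_cases h : i ∈ T
          · exact Finset.mem_union_left _ h
          · refine Finset.mem_union_right _ (Finset.mem_compl.2 ?_)
            intro hm
            rcases Finset.mem_union.1 hm with h' | h'
            · exact (Finset.mem_compl.1 hi) h'
            · exact h h'
        · intro hi
          rcases Finset.mem_union.1 hi with h | h
          · exact (Finset.mem_filter.1 h).1
          · exact Finset.mem_compl.2
              (fun hx' => (Finset.mem_compl.1 h) (Finset.mem_union_left _ hx'))
      have hsplit1 : ∀ γ : E →ₗ[ℝ] ℝ, dz V γ Xᶜ = dz V γ T + dz V γ ((X ∪ T)ᶜ) := by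
        intro γ; rw [hXdecomp]; exact dz_union hTdisj2
      set Rest : Finset ι := ((X ∪ T)ᶜ).filter (fun i => ¬ (0 < xt i ∧ xt i < xstar))
        with hRdef
      have hCR : Disjoint C Rest := by
        rw [Finset.disjoint_left]
        intro i hiC hiR
        exact (Finset.mem_filter.1 hiR).2 (Finset.mem_filter.1 hiC).2
      have hCRu : (X ∪ T)ᶜ = C ∪ Rest := by
        ext i
        constructor
        · intro hi
          by_cases h : 0 < xt i ∧ xt i < xstar
          · have hiX' : i ∉ X := fun hx' =>
              (Finset.mem_compl.1 hi) (Finset.mem_union_left _ hx')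
            exact Finset.mem_union_left _
              (Finset.mem_filter.2 ⟨Finset.mem_compl.2 hiX', h⟩)
          · exact Finset.mem_union_right _ (Finset.mem_filter.2 ⟨hi, h⟩)
        · intro hi
          rcases Finset.mem_union.1 hi with h | h
          · obtain ⟨hic, hcond⟩ := Finset.mem_filter.1 h
            refine Finset.mem_compl.2 ?_
            intro hm
            rcases Finset.mem_union.1 hm with h' | h'
            · exact (Finset.mem_compl.1 hic) h'
            · have := (Finset.mem_filter.1 h').2
              rw [this, hjx] at hcond
              exact absurd hcond.2 (lt_irrefl _)
          · exact (Finset.mem_filter.1 h).1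
      have hsplit2 : ∀ γ : E →ₗ[ℝ] ℝ, dz V γ ((X ∪ T)ᶜ) = dz V γ C + dz V γ Rest := by
        intro γ; rw [hCRu]; exact dz_union hCR
      have hxspos : 0 < xstar := by rw [← hjx]; exact hjpos
      have hψC : dz V ψ C = - dz V φ C := by
        rw [dz, dz, ← Finset.sum_neg_distrib]
        refine Finset.sum_congr rfl (fun i hi => ?_)
        obtain ⟨hic, hpos, hlt⟩ := Finset.mem_filter.1 hi
        have hiX' : i ∉ X := Finset.mem_compl.1 hic
        rw [hsgnψ i hiX', hsgnφ i hiX', sgnz_of_pos hpos,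
          sgnz_of_neg (by linarith : xt i - xstar < 0)]
        ring
      have hψRest : dz V ψ Rest = dz V φ Rest := by
        refine dz_congr (fun i hi => ?_)
        obtain ⟨hicomp, hcond⟩ := Finset.mem_filter.1 hi
        have hiXT : i ∉ X ∪ T := Finset.mem_compl.1 hicomp
        have hiX' : i ∉ X := fun h => hiXT (Finset.mem_union_left _ h)
        have hiT : i ∉ T := fun h => hiXT (Finset.mem_union_right _ h)
        have hne0 : xt i ≠ 0 := hxne i hiX'
        have hnej : xt i ≠ xstar := by
          intro h
          exact hiT (Finset.mem_filter.2 ⟨Finset.mem_compl.2 hiX', by rw [h, ← hjx]⟩)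
        rw [hsgnψ i hiX', hsgnφ i hiX']
        rcases lt_trichotomy (xt i) 0 with h|h|h
        · rw [sgnz_of_neg h, sgnz_of_neg (by linarith : xt i - xstar < 0)]
        · exact absurd h hne0
        · have hnlt : ¬ xt i < xstar := fun hlt => hcond ⟨h, hlt⟩
          have hgt : xstar < xt i := lt_of_le_of_ne (not_lt.1 hnlt) (Ne.symm hnej)
          rw [sgnz_of_pos h, sgnz_of_pos (by linarith : 0 < xt i - xstar)]
      have hφXc : dz V φ Xᶜ = dz V φ T + (dz V φ C + dz V φ Rest) := by
        rw [← hsplit2 φ, ← hsplit1 φ]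
      have hψXc : dz V ψ ((X ∪ T)ᶜ) = dz V φ Rest := by
        rw [hsplit2 ψ, hψC, hCzero, hψRest]; ring
      have hψval : dz V ψ ((X ∪ T)ᶜ) = (DR V X : ℤ) - dz V φ T := by
        rw [hψXc]
        rw [hφdz, hCzero] at hφXc
        omega
      have hD₁ : (DR V X : ℤ) - dz V φ T ≤ (DR V (X ∪ T) : ℤ) := by
        have hle := le_DR' (X := X ∪ T) hψ0
        rw [hψval] at hle
        exact hle
      have hrank' : finrank ℝ (NN V (X ∪ T)) + s ≤ confRank V := by rw [hrkT]; omega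
      obtain ⟨S₁, α₁, o1, o2, o3, o4, o5, o6, o7⟩ := ih (X ∪ T) hsatT hrank'
      set c : ℝ := if 0 < dz V φ T then 1 else -1 with hcdef
      have hc : c = 1 ∨ c = -1 := by rw [hcdef]; split <;> simp
      have hcne : c ≠ 0 := by rcases hc with h|h <;> rw [h] <;> norm_num
      obtain ⟨x, hx, hP⟩ := perturb V α₁ (c • φ)
      set α : E →ₗ[ℝ] ℝ := α₁ + x • (c • φ) with hαdef
      have hTX : ∀ i ∈ T, i ∉ X := fun i hi => Finset.mem_compl.1 (Finset.mem_filter.1 hi).1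
      have hα₁T : ∀ i ∈ T, α₁ (V i) = 0 := fun i hi => o4 i (Finset.mem_union_right _ hi)
      have hαT : ∀ i ∈ T, α (V i) = x * (c * φ (V i)) := by
        intro i hi
        have := (hP i).2 (hα₁T i hi)
        simpa using this
      have hdisjTS : Disjoint T S₁ := by
        rw [Finset.disjoint_right]
        intro i hiS hiT
        exact (Finset.disjoint_left.1 o1) hiS (Finset.mem_union_right _ hiT)
      have hαTval : dz V α T = |dz V φ T| := by
        have hcongr : dz V α T = ∑ i ∈ T, (sgnz c * sgnz (φ (V i))) := by
          rw [dz]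
          refine Finset.sum_congr rfl (fun i hi => ?_)
          rw [hαT i hi, sgnz_mul_pos hx, sgnz_mul]
        rw [hcongr, ← Finset.mul_sum]
        have hsum : (∑ i ∈ T, sgnz (φ (V i))) = dz V φ T := rfl
        rw [hsum]
        rcases lt_or_ge 0 (dz V φ T) with h | h
        · have hc1 : c = 1 := by rw [hcdef, if_pos h]
          rw [hc1, sgnz_of_pos one_pos, one_mul, abs_of_pos h]
        · have hlt : dz V φ T < 0 := lt_of_le_of_ne h hεne
          have hc1 : c = -1 := by rw [hcdef, if_neg (not_lt.2 h)]
          rw [hc1, sgnz_of_neg (by norm_num : (-1:ℝ) < 0), abs_of_neg hlt]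
          ring
      have hdzS₁ : dz V α S₁ = dz V α₁ S₁ := by
        refine dz_congr (fun i hi => ?_)
        exact (hP i).1 (o5 i hi)
      refine ⟨T ∪ S₁, α, ?_, ?_, ?_, ?_, ?_, ?_, ?_⟩
      · rw [Finset.disjoint_union_left]
        exact ⟨hdisjT, Finset.disjoint_left.2 (fun i hi hi' =>
          (Finset.disjoint_left.1 o1) hi (Finset.mem_union_left _ hi'))⟩
      · intro i hiX hmem
        rw [← Finset.union_assoc] at hmem
        by_cases hiT : i ∈ T
        · exact Finset.mem_union_left _ hiT
        · have hnot : i ∉ X ∪ T := by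
            rw [Finset.mem_union]; tauto
          exact Finset.mem_union_right _ (o2 i hnot hmem)
      · rw [← Finset.union_assoc, o3, hrkT]; omega
      · intro i hi
        have h1 : α₁ (V i) = 0 := o4 i (Finset.mem_union_left _ hi)
        have h2 : φ (V i) = 0 := hφX i hi
        rw [hαdef]
        simp [h1, h2]
      · intro i hi
        rcases Finset.mem_union.1 hi with h | h
        · rw [hαT i h]
          exact mul_ne_zero (ne_of_gt hx) (mul_ne_zero hcne (hφne i (hTX i h)))
        · intro hcon
          have := (hP i).1 (o5 i h)
          rw [hcon, sgnz_zero] at this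
          exact o5 i h (sgnz_eq_zero_iff.1 this.symm)
      · have hsplit : dz V α (T ∪ S₁) = dz V α T + dz V α S₁ := dz_union hdisjTS
        rw [hsplit, hdzS₁, hαTval]
        have h1 : (1:ℤ) ≤ |dz V φ T| := by
          rcases lt_or_ge 0 (dz V φ T) with h | h
          · rw [abs_of_pos h]; omega
          · rw [abs_of_neg (lt_of_le_of_ne h hεne)]; omega
        have h2 : dz V φ T ≤ |dz V φ T| := le_abs_self _
        have h3 := o6
        have h4 := hD₁
        push_cast at h3 ⊢
        omega
      · have hsplit : dz V α (T ∪ S₁) = dz V α T + dz V α S₁ := dz_union hdisjTS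
        rw [hsplit, hdzS₁, hαTval, ← Finset.union_assoc]
        have h2 : dz V φ T ≤ |dz V φ T| := le_abs_self _
        have h4 := hD₁
        have h5 := o7
        omega

/-- absolute version of DR -/
def DS (V : ι → E) (S : Finset ι) : ℕ :=
  sSup {k | ∃ φ : E →ₗ[ℝ] ℝ, k = (dz V φ S).natAbs}

lemma DS_set_nonempty (V : ι → E) (S : Finset ι) :
    {k | ∃ φ : E →ₗ[ℝ] ℝ, k = (dz V φ S).natAbs}.Nonempty :=
  ⟨(dz V 0 S).natAbs, 0, rfl⟩

lemma DS_set_bdd (V : ι → E) (S : Finset ι) :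
    BddAbove {k | ∃ φ : E →ₗ[ℝ] ℝ, k = (dz V φ S).natAbs} := by
  refine ⟨Fintype.card ι, fun k hk => ?_⟩
  obtain ⟨φ, rfl⟩ := hk
  have h1 := abs_dz_le V φ S
  have h2 : (S.card : ℤ) ≤ Fintype.card ι := by exact_mod_cast Finset.card_le_univ _
  rw [Int.abs_eq_natAbs] at h1
  exact_mod_cast h1.trans h2

lemma le_DS (V : ι → E) (S : Finset ι) (φ : E →ₗ[ℝ] ℝ) :
    (dz V φ S).natAbs ≤ DS V S :=
  le_csSup (DS_set_bdd V S) ⟨φ, rfl⟩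

lemma DS_attained (V : ι → E) (S : Finset ι) :
    ∃ φ : E →ₗ[ℝ] ℝ, dz V φ S = DS V S := by
  obtain ⟨φ, hk⟩ := Nat.sSup_mem (DS_set_nonempty V S) (DS_set_bdd V S)
  have hDS : DS V S = (dz V φ S).natAbs := hk
  rcases Int.natAbs_eq (dz V φ S) with h | h
  · exact ⟨φ, by rw [hDS, ← h]⟩
  · refine ⟨-φ, ?_⟩
    rw [dz_neg, hDS]; omega

lemma posCount_subfam (V : ι → E) (S : Finset ι) (φ : E →ₗ[ℝ] ℝ) :
    posCount φ (subfam V S) = (S.filter fun i => 0 < φ (V i)).card := by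
  refine Finset.card_bij (fun i _ => i.1) ?_ ?_ ?_
  · intro a ha
    exact Finset.mem_filter.2 ⟨a.2, (Finset.mem_filter.1 ha).2⟩
  · intro a _ b _ h; exact Subtype.ext h
  · intro b hb
    obtain ⟨hb1, hb2⟩ := Finset.mem_filter.1 hb
    exact ⟨⟨b, hb1⟩, Finset.mem_filter.2 ⟨Finset.mem_univ _, hb2⟩, rfl⟩

lemma negCount_subfam (V : ι → E) (S : Finset ι) (φ : E →ₗ[ℝ] ℝ) :
    negCount φ (subfam V S) = (S.filter fun i => φ (V i) < 0).card := by
  refine Finset.card_bij (fun i _ => i.1) ?_ ?_ ?_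
  · intro a ha
    exact Finset.mem_filter.2 ⟨a.2, (Finset.mem_filter.1 ha).2⟩
  · intro a _ b _ h; exact Subtype.ext h
  · intro b hb
    obtain ⟨hb1, hb2⟩ := Finset.mem_filter.1 hb
    exact ⟨⟨b, hb1⟩, Finset.mem_filter.2 ⟨Finset.mem_univ _, hb2⟩, rfl⟩

lemma disc_subfam_eq (V : ι → E) (S : Finset ι) : disc (subfam V S) = DS V S := by
  have h : ∀ φ : E →ₗ[ℝ] ℝ,
      ((posCount φ (subfam V S) : ℤ) - (negCount φ (subfam V S) : ℤ)).natAbs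
        = (dz V φ S).natAbs := by
    intro φ
    rw [posCount_subfam, negCount_subfam, dz_eq_counts]
  unfold disc DS
  congr 1
  ext k
  constructor
  · rintro ⟨φ, rfl⟩; exact ⟨φ, h φ⟩
  · rintro ⟨φ, rfl⟩; exact ⟨φ, (h φ).symm⟩

lemma disc_univ_eq (V : ι → E) : disc V = DS V Finset.univ := by
  have h : ∀ φ : E →ₗ[ℝ] ℝ,
      ((posCount φ V : ℤ) - (negCount φ V : ℤ)).natAbs = (dz V φ Finset.univ).natAbs := by
    intro φ
    rw [dz_eq_counts]
    rfl
  unfold disc DS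
  congr 1
  ext k
  constructor
  · rintro ⟨φ, rfl⟩; exact ⟨φ, h φ⟩
  · rintro ⟨φ, rfl⟩; exact ⟨φ, (h φ).symm⟩

lemma posCount_contract (V : ι → E) (S : Finset ι)
    (φ : (E ⧸ Submodule.span ℝ (V '' (S : Set ι))) →ₗ[ℝ] ℝ) :
    posCount φ (contract V S)
      = (Sᶜ.filter fun i => 0 < φ (Submodule.Quotient.mk (V i))).card := by
  refine Finset.card_bij (fun i _ => i.1) ?_ ?_ ?_
  · intro a ha
    exact Finset.mem_filter.2 ⟨Finset.mem_compl.2 a.2, (Finset.mem_filter.1 ha).2⟩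
  · intro a _ b _ h; exact Subtype.ext h
  · intro b hb
    obtain ⟨hb1, hb2⟩ := Finset.mem_filter.1 hb
    exact ⟨⟨b, Finset.mem_compl.1 hb1⟩, Finset.mem_filter.2 ⟨Finset.mem_univ _, hb2⟩, rfl⟩

lemma negCount_contract (V : ι → E) (S : Finset ι)
    (φ : (E ⧸ Submodule.span ℝ (V '' (S : Set ι))) →ₗ[ℝ] ℝ) :
    negCount φ (contract V S)
      = (Sᶜ.filter fun i => φ (Submodule.Quotient.mk (V i)) < 0).card := by
  refine Finset.card_bij (fun i _ => i.1) ?_ ?_ ?_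
  · intro a ha
    exact Finset.mem_filter.2 ⟨Finset.mem_compl.2 a.2, (Finset.mem_filter.1 ha).2⟩
  · intro a _ b _ h; exact Subtype.ext h
  · intro b hb
    obtain ⟨hb1, hb2⟩ := Finset.mem_filter.1 hb
    exact ⟨⟨b, Finset.mem_compl.1 hb1⟩, Finset.mem_filter.2 ⟨Finset.mem_univ _, hb2⟩, rfl⟩

lemma disc_contract_eq (V : ι → E) (S : Finset ι) : disc (contract V S) = DR V S := by
  unfold disc DR
  congr 1
  ext k
  constructor
  · rintro ⟨φ, rfl⟩
    have e1 : (Sᶜ.filter fun i => 0 < φ (Submodule.Quotient.mk (V i)))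
        = (Sᶜ.filter fun i =>
            0 < (φ.comp (Submodule.span ℝ (V '' (S : Set ι))).mkQ) (V i)) :=
      Finset.filter_congr (fun i _ => Iff.rfl)
    have e2 : (Sᶜ.filter fun i => φ (Submodule.Quotient.mk (V i)) < 0)
        = (Sᶜ.filter fun i =>
            (φ.comp (Submodule.span ℝ (V '' (S : Set ι))).mkQ) (V i) < 0) :=
      Finset.filter_congr (fun i _ => Iff.rfl)
    refine ⟨φ.comp (Submodule.span ℝ (V '' (S : Set ι))).mkQ, ?_, ?_⟩
    · intro i hi
      have hmem : V i ∈ Submodule.span ℝ (V '' (S : Set ι)) :=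
        Submodule.subset_span ⟨i, by simpa using hi, rfl⟩
      simp [Submodule.mkQ_apply, (Submodule.Quotient.mk_eq_zero _).2 hmem]
    · rw [posCount_contract, negCount_contract, dz_eq_counts, e1, e2]
  · rintro ⟨φ, hφ0, rfl⟩
    set M := Submodule.span ℝ (V '' (S : Set ι)) with hMdef
    have hker : M ≤ LinearMap.ker φ := by
      rw [hMdef, Submodule.span_le]
      rintro w ⟨i, hi, rfl⟩
      simpa [LinearMap.mem_ker] using hφ0 i (by simpa using hi)
    have hl : ∀ i : ι, (M.liftQ φ hker) (Submodule.Quotient.mk (V i)) = φ (V i) :=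
      fun i => Submodule.liftQ_apply M φ (V i)
    have e1 : (Sᶜ.filter fun i => 0 < (M.liftQ φ hker) (Submodule.Quotient.mk (V i)))
        = (Sᶜ.filter fun i => 0 < φ (V i)) :=
      Finset.filter_congr (fun i _ => by rw [hl i])
    have e2 : (Sᶜ.filter fun i => (M.liftQ φ hker) (Submodule.Quotient.mk (V i)) < 0)
        = (Sᶜ.filter fun i => φ (V i) < 0) :=
      Finset.filter_congr (fun i _ => by rw [hl i])
    refine ⟨M.liftQ φ hker, ?_⟩
    rw [posCount_contract, negCount_contract, dz_eq_counts, e1, e2]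

lemma disc_eq_DR_zero (V : ι → E) :
    disc V = DR V (Finset.univ.filter fun i => V i = 0) := by
  set X₀ : Finset ι := Finset.univ.filter (fun i => V i = 0) with hX₀def
  have hcount : ∀ φ : E →ₗ[ℝ] ℝ, dz V φ Finset.univ = dz V φ X₀ᶜ := by
    intro φ
    have h2 : dz V φ X₀ = 0 := by
      apply Finset.sum_eq_zero
      intro i hi
      rw [(Finset.mem_filter.1 hi).2]
      simp [sgnz_zero]
    have h4 : dz V φ (X₀ ∪ X₀ᶜ) = dz V φ X₀ + dz V φ X₀ᶜ :=
      dz_union disjoint_compl_right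
    rw [Finset.union_compl] at h4
    omega
  have h : ∀ φ : E →ₗ[ℝ] ℝ,
      ((posCount φ V : ℤ) - (negCount φ V : ℤ)).natAbs = (dz V φ X₀ᶜ).natAbs := by
    intro φ
    rw [← hcount, dz_eq_counts]
    rfl
  unfold disc DR
  congr 1
  ext k
  constructor
  · rintro ⟨φ, rfl⟩
    refine ⟨φ, ?_, h φ⟩
    intro i hi
    rw [(Finset.mem_filter.1 hi).2]
    simp
  · rintro ⟨φ, -, rfl⟩
    exact ⟨φ, (h φ).symm⟩

lemma superadd [FiniteDimensional ℝ E] (V : ι → E) (S : Finset ι)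
    (hLC : ∀ i, V i ∈ NN V S → i ∈ S) :
    DS V S + DR V S ≤ DS V Finset.univ := by
  obtain ⟨α, hα⟩ := DS_attained V S
  obtain ⟨ψ, hψ0, hψne, hψdz⟩ := exists_generic_optimal V S
    (fun i hi hmem => hi (hLC i hmem))
  obtain ⟨x, hx, hP⟩ := perturb V ψ α
  set φ := ψ + x • α with hφdef
  have h1 : dz V φ S = dz V α S := by
    refine dz_congr fun i hi => ?_
    rw [(hP i).2 (hψ0 i hi), sgnz_mul_pos hx]
  have h2 : dz V φ Sᶜ = dz V ψ Sᶜ :=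
    dz_congr fun i hi => (hP i).1 (hψne i (Finset.mem_compl.1 hi))
  have h3 : dz V φ (S ∪ Sᶜ) = dz V φ S + dz V φ Sᶜ := dz_union disjoint_compl_right
  rw [Finset.union_compl] at h3
  have h4 : dz V φ Finset.univ = (DS V S : ℤ) + DR V S := by
    rw [h3, h1, h2, hα, hψdz]
  have h5 := le_DS V Finset.univ φ
  rw [h4] at h5
  have h6 : ((DS V S : ℤ) + DR V S).natAbs = DS V S + DR V S := by
    omega
  omega

lemma range_subfam (V : ι → E) (S : Finset ι) :
    Set.range (subfam V S) = V '' (S : Set ι) := by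
  ext y
  constructor
  · rintro ⟨⟨i, hi⟩, rfl⟩; exact ⟨i, by simpa using hi, rfl⟩
  · rintro ⟨i, hi, rfl⟩; exact ⟨⟨i, by simpa using hi⟩, rfl⟩

lemma confRank_subfam (V : ι → E) (S : Finset ι) :
    confRank (subfam V S) = finrank ℝ (NN V S) := by
  unfold confRank NN
  rw [range_subfam]

end DiscAux

/-- for every `1 ≤ s ≤ r − 1` there is a linearly closed subfamily `W` of
rank `s` with `disc V = disc W + disc (V/W)` and `disc W ≥ min (disc V) s`. -/
theorem exists_extremal_subfam_with_disc {E : Type*} [AddCommGroup E] [Module ℝ E]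
    [FiniteDimensional ℝ E] (hE : 1 ≤ Module.finrank ℝ E)
    {ι : Type*} [Fintype ι] (V : ι → E) (s : ℕ)
    (hs1 : 1 ≤ s) (hs2 : s ≤ confRank V - 1) :
    ∃ S : Finset ι, LinClosed V S ∧ confRank (subfam V S) = s ∧
      disc V = disc (subfam V S) + disc (contract V S) ∧
      min (disc V) s ≤ disc (subfam V S) := by
  classical
  set X₀ : Finset ι := Finset.univ.filter (fun i => V i = 0) with hX₀def
  have hNX₀ : DiscAux.NN V X₀ = ⊥ := by
    rw [DiscAux.NN, eq_bot_iff, Submodule.span_le]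
    rintro w ⟨i, hi, rfl⟩
    have hi' : i ∈ X₀ := by simpa using hi
    have h0 : V i = 0 := (Finset.mem_filter.1 hi').2
    simp [h0]
  have hsat : ∀ i ∉ X₀, V i ∉ DiscAux.NN V X₀ := by
    intro i hi hcon
    rw [hNX₀] at hcon
    exact hi (Finset.mem_filter.2 ⟨Finset.mem_univ _, by simpa using hcon⟩)
  have hrank0 : Module.finrank ℝ (DiscAux.NN V X₀) + s ≤ confRank V := by
    rw [hNX₀, finrank_bot]
    omega
  obtain ⟨S₁, α, o1, o2, o3, o4, o5, o6, o7⟩ := DiscAux.big_M V s X₀ hsat hrank0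
  have hdisjX : Disjoint X₀ S₁ := o1.symm
  have hclosed : LinClosed V (X₀ ∪ S₁) := by
    intro i hmem
    by_cases h : i ∈ X₀
    · exact Finset.mem_union_left _ h
    · exact Finset.mem_union_right _ (o2 i h hmem)
  have hdisc0 : disc V = DiscAux.DR V X₀ := by
    have h := DiscAux.disc_eq_DR_zero V
    rw [← hX₀def] at h
    exact h
  have hsub : disc (subfam V (X₀ ∪ S₁)) = DiscAux.DS V (X₀ ∪ S₁) :=
    DiscAux.disc_subfam_eq V _
  have hcon : disc (contract V (X₀ ∪ S₁)) = DiscAux.DR V (X₀ ∪ S₁) :=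
    DiscAux.disc_contract_eq V _
  have hdzX₀ : DiscAux.dz V α X₀ = 0 := by
    apply Finset.sum_eq_zero
    intro i hi
    rw [(Finset.mem_filter.1 hi).2]
    simp [DiscAux.sgnz_zero]
  have hdzU : DiscAux.dz V α (X₀ ∪ S₁) = DiscAux.dz V α S₁ := by
    rw [DiscAux.dz_union hdisjX, hdzX₀, zero_add]
  have hle : DiscAux.dz V α S₁ ≤ (DiscAux.DS V (X₀ ∪ S₁) : ℤ) := by
    have h := DiscAux.le_DS V (X₀ ∪ S₁) α
    have h2 : DiscAux.dz V α (X₀ ∪ S₁) ≤ ((DiscAux.dz V α (X₀ ∪ S₁)).natAbs : ℤ) :=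
      Int.le_natAbs
    omega
  have hsup : DiscAux.DS V (X₀ ∪ S₁) + DiscAux.DR V (X₀ ∪ S₁)
      ≤ DiscAux.DS V Finset.univ :=
    DiscAux.superadd V _ hclosed
  have hDSuniv : disc V = DiscAux.DS V Finset.univ := DiscAux.disc_univ_eq V
  refine ⟨X₀ ∪ S₁, hclosed, ?_, ?_, ?_⟩
  · rw [DiscAux.confRank_subfam, o3, hNX₀, finrank_bot]
    omega
  · rw [hsub, hcon]
    omega
  · rw [hsub]
    have h6 := o6
    omega

end
end

section
/- Let A be a finite set of at least 3 points in the real plane ℝ² and let a ∈ A. If the points of A ∖ {a} are not all contained in a single affine line, then there exists an affine line L in ℝ² such that a ∉ L and L contains exactly two points of A. -/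
open scoped Classical

namespace SG17



/-- twice the signed area of the triangle `p q r`. -/
def det3 (p q r : ℝ × ℝ) : ℝ := (q.1 - p.1) * (r.2 - p.2) - (q.2 - p.2) * (r.1 - p.1)

/-- slope of the line through `u`, `v`. -/
noncomputable def lk (u v : ℝ × ℝ) : ℝ := (v.2 - u.2) / (v.1 - u.1)

/-- intercept of the line through `u`, `v`. -/
noncomputable def lc (u v : ℝ × ℝ) : ℝ := u.2 - lk u v * u.1

lemma det3_swap23 (u v w : ℝ × ℝ) : det3 u v w = -det3 u w v := by unfold det3; ring

lemma onL_lk₁ (u v : ℝ × ℝ) : u.2 = lk u v * u.1 + lc u v := by simp only [lc, lk]; ring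

lemma onL_lk₂ (u v : ℝ × ℝ) (h : u.1 ≠ v.1) : v.2 = lk u v * v.1 + lc u v := by
  have h' : v.1 - u.1 ≠ 0 := sub_ne_zero.mpr (Ne.symm h)
  simp only [lk, lc]
  field_simp
  ring

lemma lk_unique (u v : ℝ × ℝ) (h : u.1 ≠ v.1) (k c : ℝ) (hu : u.2 = k * u.1 + c)
    (hv : v.2 = k * v.1 + c) : k = lk u v ∧ c = lc u v := by
  have h' : v.1 - u.1 ≠ 0 := sub_ne_zero.mpr (Ne.symm h)
  have hk : k = lk u v := by
    simp only [lk]; rw [hu, hv]; field_simp; ring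
  refine ⟨hk, ?_⟩
  simp only [lc, lk]
  rw [hu, hv]
  field_simp
  ring

lemma det3_onL (u v w : ℝ × ℝ) (h : u.1 ≠ v.1) :
    det3 u v w = (v.1 - u.1) * (w.2 - (lk u v * w.1 + lc u v)) := by
  have h' : v.1 - u.1 ≠ 0 := sub_ne_zero.mpr (Ne.symm h)
  simp only [det3, lk, lc]
  field_simp
  ring

lemma vdist_formula (x₀ y₀ k c : ℝ) (w w' : ℝ × ℝ) (hw : w.2 = k * w.1 + c)
    (hw' : w'.2 = k * w'.1 + c) (hA' : w'.1 ≠ x₀) :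
    w.2 - (lk (x₀, y₀) w' * w.1 + lc (x₀, y₀) w')
      = (y₀ - (k * x₀ + c)) * ((w.1 - x₀) / (w'.1 - x₀) - 1) := by
  have h' : w'.1 - x₀ ≠ 0 := sub_ne_zero.mpr hA'
  simp only [lk, lc]
  rw [hw, hw']
  field_simp
  ring

lemma h_affine (k₀ c₀ : ℝ) (u v x : ℝ × ℝ) (huv : u.1 ≠ v.1)
    (hx : x.2 = lk u v * x.1 + lc u v) :
    x.2 - (k₀ * x.1 + c₀)
      = (u.2 - (k₀ * u.1 + c₀)) + ((x.1 - u.1) / (v.1 - u.1)) *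
          ((v.2 - (k₀ * v.1 + c₀)) - (u.2 - (k₀ * u.1 + c₀))) := by
  have h' : v.1 - u.1 ≠ 0 := sub_ne_zero.mpr (Ne.symm huv)
  rw [hx]
  simp only [lk, lc]
  field_simp
  ring

theorem core (C : Finset (ℝ × ℝ))
    (h3 : ∃ u ∈ C, ∃ v ∈ C, ∃ w ∈ C, det3 u v w ≠ 0) :
    ∃ k c : ℝ, (C.filter fun p => p.2 = k * p.1 + c).card = 2 := by
  by_contra hno
  push_neg at hno
  -- every nonvertical spanned line contains at least 3 points of C
  have hS3 : ∀ (k c : ℝ) (u v : ℝ × ℝ), u ∈ C → v ∈ C → u.1 ≠ v.1 →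
      u.2 = k * u.1 + c → v.2 = k * v.1 + c →
      3 ≤ (C.filter fun p => p.2 = k * p.1 + c).card := by
    intro k c u v hu hv hne hu2 hv2
    have h2 : 1 < (C.filter fun p => p.2 = k * p.1 + c).card := by
      rw [Finset.one_lt_card]
      exact ⟨u, Finset.mem_filter.mpr ⟨hu, hu2⟩, v, Finset.mem_filter.mpr ⟨hv, hv2⟩,
        fun h => hne (congrArg Prod.fst h)⟩
    have := hno k c
    omega
  -- a triple with a nonvertical base pair
  obtain ⟨u₁, hu₁, v₁, hv₁, w₁, hw₁, hdet⟩ := h3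
  have tripNC : ∃ u v w : ℝ × ℝ, u ∈ C ∧ v ∈ C ∧ w ∈ C ∧ u.1 ≠ v.1 ∧ det3 u v w ≠ 0 := by
    by_cases h12 : u₁.1 = v₁.1
    · by_cases h13 : u₁.1 = w₁.1
      · exfalso
        apply hdet
        have e1 : v₁.1 - u₁.1 = 0 := by rw [h12]; ring
        have e2 : w₁.1 - u₁.1 = 0 := by rw [h13]; ring
        simp only [det3, e1, e2]
        ring
      · exact ⟨u₁, w₁, v₁, hu₁, hw₁, hv₁, h13, by rw [det3_swap23] at hdet; simpa using hdet⟩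
    · exact ⟨u₁, v₁, w₁, hu₁, hv₁, hw₁, h12, hdet⟩
  obtain ⟨u₂, v₂, w₂, hu₂, hv₂, hw₂, hne₂, hdet₂⟩ := tripNC
  have hnotL₂ : ¬ (w₂.2 = lk u₂ v₂ * w₂.1 + lc u₂ v₂) := by
    intro h
    apply hdet₂
    rw [det3_onL u₂ v₂ w₂ hne₂, h]
    ring
  -- minimize the vertical distance over all admissible (point, spanned line) pairs
  have hTne : ∃ t : (ℝ × ℝ) × (ℝ × ℝ) × (ℝ × ℝ),
      t ∈ (C ×ˢ C ×ˢ C).filter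
        (fun t => t.2.1.1 ≠ t.2.2.1 ∧ ¬ (t.1.2 = lk t.2.1 t.2.2 * t.1.1 + lc t.2.1 t.2.2)) := by
    refine ⟨(w₂, u₂, v₂), Finset.mem_filter.mpr ⟨?_, hne₂, hnotL₂⟩⟩
    simp [Finset.mem_product, hu₂, hv₂, hw₂]
  obtain ⟨t₀, ht₀, hmin⟩ := Finset.exists_min_image _
    (fun t => |t.1.2 - (lk t.2.1 t.2.2 * t.1.1 + lc t.2.1 t.2.2)|) ⟨hTne.choose, hTne.choose_spec⟩
  obtain ⟨p, u₀, v₀⟩ := t₀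
  rw [Finset.mem_filter] at ht₀
  obtain ⟨hprod₀, huv₀', hpnot'⟩ := ht₀
  simp only [Finset.mem_product] at hprod₀
  obtain ⟨hpC, hu₀C, hv₀C⟩ := hprod₀
  have huv₀ : u₀.1 ≠ v₀.1 := huv₀'
  obtain ⟨k₀, hk₀⟩ : ∃ k : ℝ, k = lk u₀ v₀ := ⟨_, rfl⟩
  obtain ⟨c₀, hc₀⟩ : ∃ c : ℝ, c = lc u₀ v₀ := ⟨_, rfl⟩
  have hpnot : ¬ (p.2 = k₀ * p.1 + c₀) := by rw [hk₀, hc₀]; exact hpnot'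
  obtain ⟨e₀, he₀def⟩ : ∃ e : ℝ, e = p.2 - (k₀ * p.1 + c₀) := ⟨_, rfl⟩
  have he₀ : e₀ ≠ 0 := by rw [he₀def]; exact sub_ne_zero.mpr hpnot
  obtain ⟨d, hd⟩ : ∃ dd : ℝ, dd = |e₀| := ⟨_, rfl⟩
  have hd0 : 0 < d := by rw [hd]; exact abs_pos.mpr he₀
  have hsq : 0 < e₀ ^ 2 :=
    lt_of_le_of_ne (sq_nonneg e₀) (Ne.symm (pow_ne_zero 2 he₀))
  -- the minimality oracle
  have hOr : ∀ (k c : ℝ) (w u v : ℝ × ℝ), w ∈ C → u ∈ C → v ∈ C → u.1 ≠ v.1 →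
      u.2 = k * u.1 + c → v.2 = k * v.1 + c → ¬ (w.2 = k * w.1 + c) →
      d ≤ |w.2 - (k * w.1 + c)| := by
    intro k c w u v hw hu hv hne hu2 hv2 hwn
    obtain ⟨hk, hc⟩ := lk_unique u v hne k c hu2 hv2
    have hmem : (w, u, v) ∈ (C ×ˢ C ×ˢ C).filter
        (fun t => t.2.1.1 ≠ t.2.2.1 ∧ ¬ (t.1.2 = lk t.2.1 t.2.2 * t.1.1 + lc t.2.1 t.2.2)) := by
      refine Finset.mem_filter.mpr ⟨?_, ?_, ?_⟩
      · simp [Finset.mem_product, hw, hu, hv]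
      · exact hne
      · simp only
        rw [← hk, ← hc]
        exact hwn
    have hmm := hmin (w, u, v) hmem
    simp only at hmm
    rw [← hk, ← hc] at hmm
    calc d = |p.2 - (k₀ * p.1 + c₀)| := by rw [hd, he₀def]
      _ = |p.2 - (lk u₀ v₀ * p.1 + lc u₀ v₀)| := by rw [← hk₀, ← hc₀]
      _ ≤ |w.2 - (k * w.1 + c)| := hmm
  -- the basic forbidden configuration
  have hSS : ∀ (w₀ : ℝ × ℝ) (k c : ℝ), w₀ ∈ C → ¬ (w₀.2 = k * w₀.1 + c) →
      |w₀.2 - (k * w₀.1 + c)| = d → ∀ w w' : ℝ × ℝ, w ∈ C → w' ∈ C →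
      w.2 = k * w.1 + c → w'.2 = k * w'.1 + c →
      0 < (w.1 - w₀.1) / (w'.1 - w₀.1) → (w.1 - w₀.1) / (w'.1 - w₀.1) < 1 → False := by
    intro w₀ k c hw₀C hw₀n habs w w' hwC hw'C hw2 hw'2 hr0 hr1
    have hA' : w'.1 ≠ w₀.1 := by
      intro h
      rw [h, sub_self, div_zero] at hr0
      exact lt_irrefl 0 hr0
    have hform := vdist_formula w₀.1 w₀.2 k c w w' hw2 hw'2 hA'
    rw [Prod.mk.eta] at hform
    have he : w₀.2 - (k * w₀.1 + c) ≠ 0 := sub_ne_zero.mpr hw₀n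
    have hwnot : ¬ (w.2 = lk w₀ w' * w.1 + lc w₀ w') := by
      intro h
      have h0 : (w₀.2 - (k * w₀.1 + c)) * ((w.1 - w₀.1) / (w'.1 - w₀.1) - 1) = 0 := by
        rw [← hform, h]; ring
      rcases mul_eq_zero.mp h0 with h' | h'
      · exact he h'
      · linarith
    have hle := hOr (lk w₀ w') (lc w₀ w') w w₀ w' hwC hw₀C hw'C (Ne.symm hA')
      (onL_lk₁ w₀ w') (onL_lk₂ w₀ w' (Ne.symm hA')) hwnot
    rw [hform] at hle
    rw [abs_mul, abs_of_neg (by linarith : (w.1 - w₀.1) / (w'.1 - w₀.1) - 1 < 0)] at hle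
    have hb : |w₀.2 - (k * w₀.1 + c)| * -((w.1 - w₀.1) / (w'.1 - w₀.1) - 1)
        < |w₀.2 - (k * w₀.1 + c)| * 1 := by
      apply mul_lt_mul_of_pos_left _ (abs_pos.mpr he)
      linarith
    rw [mul_one, habs] at hb
    rw [habs] at hle
    linarith
  -- structure of a minimizing pair
  have hstruct : ∀ (w₀ : ℝ × ℝ) (k c : ℝ), w₀ ∈ C →
      (∃ u, u ∈ C ∧ ∃ v, v ∈ C ∧ u.1 ≠ v.1 ∧ u.2 = k * u.1 + c ∧ v.2 = k * v.1 + c) →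
      ¬ (w₀.2 = k * w₀.1 + c) → |w₀.2 - (k * w₀.1 + c)| = d →
      ((w₀.1, k * w₀.1 + c) ∈ C ∧ ∃ z z' : ℝ × ℝ, z ∈ C ∧ z' ∈ C ∧
        z.2 = k * z.1 + c ∧ z'.2 = k * z'.1 + c ∧ w₀.1 < z.1 ∧ z'.1 < w₀.1 ∧
        (∀ x, x ∈ C → x.2 = k * x.1 + c → x = (w₀.1, k * w₀.1 + c) ∨ x = z ∨ x = z')) := by
    intro w₀ k c hw₀C hsp hw₀n habs
    obtain ⟨u, huC, v, hvC, huv, hu2, hv2⟩ := hsp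
    have huniq : ∀ x y : ℝ × ℝ, x ∈ C → y ∈ C → x.2 = k * x.1 + c → y.2 = k * y.1 + c →
        0 < (x.1 - w₀.1) * (y.1 - w₀.1) → x = y := by
      intro x y hxC hyC hx2 hy2 hprod
      by_cases hxy : x.1 = y.1
      · refine Prod.ext hxy ?_
        rw [hx2, hy2, hxy]
      · exfalso
        rcases mul_pos_iff.mp hprod with ⟨ha, hb⟩ | ⟨ha, hb⟩
        · rcases lt_or_gt_of_ne (fun h : x.1 = y.1 => hxy h) with h | h
          · exact hSS w₀ k c hw₀C hw₀n habs x y hxC hyC hx2 hy2 (div_pos ha hb)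
              ((div_lt_one hb).mpr (by linarith))
          · exact hSS w₀ k c hw₀C hw₀n habs y x hyC hxC hy2 hx2 (div_pos hb ha)
              ((div_lt_one ha).mpr (by linarith))
        · rcases lt_or_gt_of_ne (fun h : x.1 = y.1 => hxy h) with h | h
          · refine hSS w₀ k c hw₀C hw₀n habs y x hyC hxC hy2 hx2 ?_ ?_
            · rw [div_pos_iff]
              exact Or.inr ⟨hb, ha⟩
            · have hne0 : x.1 - w₀.1 ≠ 0 := ne_of_lt ha
              have key : (y.1 - w₀.1) / (x.1 - w₀.1) - 1 = (y.1 - x.1) / (x.1 - w₀.1) := by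
                field_simp
                ring
              have hneg : (y.1 - x.1) / (x.1 - w₀.1) < 0 :=
                div_neg_of_pos_of_neg (by linarith) ha
              linarith [key ▸ hneg]
          · refine hSS w₀ k c hw₀C hw₀n habs x y hxC hyC hx2 hy2 ?_ ?_
            · rw [div_pos_iff]
              exact Or.inr ⟨ha, hb⟩
            · have hne0 : y.1 - w₀.1 ≠ 0 := ne_of_lt hb
              have key : (x.1 - w₀.1) / (y.1 - w₀.1) - 1 = (x.1 - y.1) / (y.1 - w₀.1) := by
                field_simp
                ring
              have hneg : (x.1 - y.1) / (y.1 - w₀.1) < 0 :=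
                div_neg_of_pos_of_neg (by linarith) hb
              linarith [key ▸ hneg]
    have hG3 : 3 ≤ (C.filter fun q => q.2 = k * q.1 + c).card := hS3 k c u v huC hvC huv hu2 hv2
    have hGmem : ∀ x : ℝ × ℝ, x ∈ (C.filter fun q => q.2 = k * q.1 + c) ↔
        (x ∈ C ∧ x.2 = k * x.1 + c) := by
      intro x; rw [Finset.mem_filter]
    have hu_gt : ∀ x ∈ (C.filter fun q => q.2 = k * q.1 + c),
        ∀ y ∈ (C.filter fun q => q.2 = k * q.1 + c), w₀.1 < x.1 → w₀.1 < y.1 → x = y := by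
      intro x hx y hy h1 h2
      obtain ⟨hxC, hx2⟩ := (hGmem x).mp hx
      obtain ⟨hyC, hy2⟩ := (hGmem y).mp hy
      exact huniq x y hxC hyC hx2 hy2 (mul_pos (by linarith) (by linarith))
    have hu_lt : ∀ x ∈ (C.filter fun q => q.2 = k * q.1 + c),
        ∀ y ∈ (C.filter fun q => q.2 = k * q.1 + c), x.1 < w₀.1 → y.1 < w₀.1 → x = y := by
      intro x hx y hy h1 h2
      obtain ⟨hxC, hx2⟩ := (hGmem x).mp hx
      obtain ⟨hyC, hy2⟩ := (hGmem y).mp hy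
      exact huniq x y hxC hyC hx2 hy2 (mul_pos_of_neg_of_neg (by linarith) (by linarith))
    have hu_eq : ∀ x ∈ (C.filter fun q => q.2 = k * q.1 + c),
        ∀ y ∈ (C.filter fun q => q.2 = k * q.1 + c), x.1 = w₀.1 → y.1 = w₀.1 → x = y := by
      intro x hx y hy h1 h2
      obtain ⟨hxC, hx2⟩ := (hGmem x).mp hx
      obtain ⟨hyC, hy2⟩ := (hGmem y).mp hy
      refine Prod.ext (by rw [h1, h2]) ?_
      rw [hx2, hy2, h1, h2]
    have main : ∀ (P₁ P₂ P₃ : ℝ × ℝ → Prop),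
        (∀ x ∈ (C.filter fun q => q.2 = k * q.1 + c), P₁ x ∨ P₂ x ∨ P₃ x) →
        (∀ x ∈ (C.filter fun q => q.2 = k * q.1 + c),
          ∀ y ∈ (C.filter fun q => q.2 = k * q.1 + c), P₂ x → P₂ y → x = y) →
        (∀ x ∈ (C.filter fun q => q.2 = k * q.1 + c),
          ∀ y ∈ (C.filter fun q => q.2 = k * q.1 + c), P₃ x → P₃ y → x = y) →
        (¬ ∃ x ∈ (C.filter fun q => q.2 = k * q.1 + c), P₁ x) → False := by
      intro P₁ P₂ P₃ hcov h₂ h₃ hnex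
      have hcov' : ∀ x ∈ (C.filter fun q => q.2 = k * q.1 + c), P₂ x ∨ P₃ x := by
        intro x hx
        rcases hcov x hx with h | h | h
        · exact absurd ⟨x, hx, h⟩ hnex
        · exact Or.inl h
        · exact Or.inr h
      have hle2 : (C.filter fun q => q.2 = k * q.1 + c).card ≤ 2 := by
        by_cases hex2 : ∃ y ∈ (C.filter fun q => q.2 = k * q.1 + c), P₂ y
        · obtain ⟨y₂, hy₂G, hy₂⟩ := hex2
          by_cases hex3 : ∃ y ∈ (C.filter fun q => q.2 = k * q.1 + c), P₃ y
          · obtain ⟨y₃, hy₃G, hy₃⟩ := hex3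
            have hsub : (C.filter fun q => q.2 = k * q.1 + c) ⊆ {y₂, y₃} := by
              intro x hx
              rcases hcov' x hx with h | h
              · simp [h₂ x hx y₂ hy₂G h hy₂]
              · simp [h₃ x hx y₃ hy₃G h hy₃]
            calc (C.filter fun q => q.2 = k * q.1 + c).card
                ≤ ({y₂, y₃} : Finset (ℝ × ℝ)).card := Finset.card_le_card hsub
              _ ≤ 2 := by
                  apply le_trans (Finset.card_insert_le y₂ {y₃})
                  simp
          · have hsub : (C.filter fun q => q.2 = k * q.1 + c) ⊆ {y₂} := by
              intro x hx
              rcases hcov' x hx with h | h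
              · simp [h₂ x hx y₂ hy₂G h hy₂]
              · exact absurd ⟨x, hx, h⟩ hex3
            calc (C.filter fun q => q.2 = k * q.1 + c).card
                ≤ ({y₂} : Finset (ℝ × ℝ)).card := Finset.card_le_card hsub
              _ ≤ 2 := by simp
        · by_cases hex3 : ∃ y ∈ (C.filter fun q => q.2 = k * q.1 + c), P₃ y
          · obtain ⟨y₃, hy₃G, hy₃⟩ := hex3
            have hsub : (C.filter fun q => q.2 = k * q.1 + c) ⊆ {y₃} := by
              intro x hx
              rcases hcov' x hx with h | h
              · exact absurd ⟨x, hx, h⟩ hex2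
              · simp [h₃ x hx y₃ hy₃G h hy₃]
            calc (C.filter fun q => q.2 = k * q.1 + c).card
                ≤ ({y₃} : Finset (ℝ × ℝ)).card := Finset.card_le_card hsub
              _ ≤ 2 := by simp
          · have hsub : (C.filter fun q => q.2 = k * q.1 + c) ⊆ (∅ : Finset (ℝ × ℝ)) := by
              intro x hx
              rcases hcov' x hx with h | h
              · exact absurd ⟨x, hx, h⟩ hex2
              · exact absurd ⟨x, hx, h⟩ hex3
            calc (C.filter fun q => q.2 = k * q.1 + c).card
                ≤ (∅ : Finset (ℝ × ℝ)).card := Finset.card_le_card hsub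
              _ ≤ 2 := by simp
      omega
    have hgt : ∃ x ∈ (C.filter fun q => q.2 = k * q.1 + c), w₀.1 < x.1 := by
      by_contra h
      refine main (fun x => w₀.1 < x.1) (fun x => x.1 < w₀.1) (fun x => x.1 = w₀.1)
        ?_ hu_lt hu_eq h
      intro x hx
      rcases lt_trichotomy w₀.1 x.1 with h' | h' | h'
      · exact Or.inl h'
      · exact Or.inr (Or.inr h'.symm)
      · exact Or.inr (Or.inl h')
    have hlt : ∃ x ∈ (C.filter fun q => q.2 = k * q.1 + c), x.1 < w₀.1 := by
      by_contra h
      refine main (fun x => x.1 < w₀.1) (fun x => w₀.1 < x.1) (fun x => x.1 = w₀.1)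
        ?_ hu_gt hu_eq h
      intro x hx
      rcases lt_trichotomy w₀.1 x.1 with h' | h' | h'
      · exact Or.inr (Or.inl h')
      · exact Or.inr (Or.inr h'.symm)
      · exact Or.inl h'
    have hmidex : ∃ x ∈ (C.filter fun q => q.2 = k * q.1 + c), x.1 = w₀.1 := by
      by_contra h
      refine main (fun x => x.1 = w₀.1) (fun x => w₀.1 < x.1) (fun x => x.1 < w₀.1)
        ?_ hu_gt hu_lt h
      intro x hx
      rcases lt_trichotomy w₀.1 x.1 with h' | h' | h'
      · exact Or.inr (Or.inl h')
      · exact Or.inl h'.symm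
      · exact Or.inr (Or.inr h')
    obtain ⟨z, hzG, hzgt⟩ := hgt
    obtain ⟨z', hz'G, hz'lt⟩ := hlt
    obtain ⟨g, hgG, hg1⟩ := hmidex
    have hgis : g = (w₀.1, k * w₀.1 + c) := by
      refine Prod.ext hg1 ?_
      rw [((hGmem g).mp hgG).2, hg1]
    refine ⟨hgis ▸ ((hGmem g).mp hgG).1, z, z', ((hGmem z).mp hzG).1, ((hGmem z').mp hz'G).1,
      ((hGmem z).mp hzG).2, ((hGmem z').mp hz'G).2, hzgt, hz'lt, ?_⟩
    intro x hxC hx2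
    have hxG : x ∈ (C.filter fun q => q.2 = k * q.1 + c) := (hGmem x).mpr ⟨hxC, hx2⟩
    rcases lt_trichotomy w₀.1 x.1 with h' | h' | h'
    · exact Or.inr (Or.inl (hu_gt x hxG z hzG h' hzgt))
    · exact Or.inl (by rw [← hgis]; exact hu_eq x hxG g hgG h'.symm hg1)
    · exact Or.inr (Or.inr (hu_lt x hxG z' hz'G h' hz'lt))
  -- apply the structure lemma to the minimizing pair itself
  have habsp : |p.2 - (k₀ * p.1 + c₀)| = d := by rw [hd, he₀def]
  have hspan₀ : ∃ u, u ∈ C ∧ ∃ v, v ∈ C ∧ u.1 ≠ v.1 ∧ u.2 = k₀ * u.1 + c₀ ∧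
      v.2 = k₀ * v.1 + c₀ := by
    refine ⟨u₀, hu₀C, v₀, hv₀C, huv₀, ?_, ?_⟩
    · rw [hk₀, hc₀]; exact onL_lk₁ u₀ v₀
    · rw [hk₀, hc₀]; exact onL_lk₂ u₀ v₀ huv₀
  obtain ⟨hfC, z, z', hzC, hz'C, hz2, hz'2, hzgt, hz'lt, hcovL⟩ :=
    hstruct p k₀ c₀ hpC hspan₀ hpnot habsp
  obtain ⟨f, hfdef⟩ : ∃ f : ℝ × ℝ, f = (p.1, k₀ * p.1 + c₀) := ⟨_, rfl⟩
  rw [← hfdef] at hfC hcovL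
  have hfx0 : f.1 = p.1 := by rw [hfdef]
  have hfy0 : f.2 = k₀ * p.1 + c₀ := by rw [hfdef]
  have hzx : z.1 ≠ p.1 := ne_of_gt hzgt
  have hz'x : z'.1 ≠ p.1 := ne_of_lt hz'lt
  -- the "partner" of w on the line through p and w
  have hexP : ∀ w : ℝ × ℝ, ∃ w' : ℝ × ℝ, w ∈ C → w.1 ≠ p.1 →
      ((w' ∈ C ∧ w'.2 = lk p w * w'.1 + lc p w ∧ (w'.1 - p.1) * (w.1 - p.1) < 0) ∧
        (∀ y : ℝ × ℝ, y ∈ C → y.2 = lk p w * y.1 + lc p w →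
          (y.1 - p.1) * (w.1 - p.1) < 0 → y = w')) := by
    intro w
    by_cases hw : w ∈ C ∧ w.1 ≠ p.1
    · obtain ⟨hwC, hwx⟩ := hw
      have hpw : p.1 ≠ w.1 := Ne.symm hwx
      have hponl : p.2 = lk p w * p.1 + lc p w := onL_lk₁ p w
      have hwonl : w.2 = lk p w * w.1 + lc p w := onL_lk₂ p w hpw
      have hfnot : ¬ (f.2 = lk p w * f.1 + lc p w) := by
        intro h
        apply hpnot
        rw [hfy0, hfx0] at h
        linarith [hponl]
      have habsf : |f.2 - (lk p w * f.1 + lc p w)| = d := by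
        have hrw : f.2 - (lk p w * f.1 + lc p w) = -(p.2 - (k₀ * p.1 + c₀)) := by
          rw [hfy0, hfx0, ← hponl]
          ring
        rw [hrw, abs_neg]
        exact habsp
      obtain ⟨hmidC, zz, zz', hzzC, hzz'C, hzz2, hzz'2, hzzgt, hzz'lt, hcov⟩ :=
        hstruct f (lk p w) (lc p w) hfC ⟨p, hpC, w, hwC, hpw, hponl, hwonl⟩ hfnot habsf
      clear hmin hOr hSS hS3 hno hstruct hcovL hnotL₂ hdet hdet₂
      have hmideq : (f.1, lk p w * f.1 + lc p w) = p := by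
        refine Prod.ext hfx0 ?_
        show lk p w * f.1 + lc p w = p.2
        rw [hfx0, ← hponl]
      rw [hmideq] at hcov
      have hzzx : p.1 < zz.1 := by rw [← hfx0]; exact hzzgt
      have hzz'x : zz'.1 < p.1 := by rw [← hfx0]; exact hzz'lt
      rcases hcov w hwC hwonl with hwp | hwzz | hwzz'
      · exact absurd (by rw [hwp]) hwx
      · refine ⟨zz', fun _ _ => ⟨⟨hzz'C, hzz'2, ?_⟩, ?_⟩⟩
        · have hwgt : p.1 < w.1 := by rw [hwzz]; exact hzzx
          exact mul_neg_of_neg_of_pos (by linarith) (by linarith)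
        · intro y hyC hyon hysgn
          have hwgt : p.1 < w.1 := by rw [hwzz]; exact hzzx
          rcases hcov y hyC hyon with hyp | hyzz | hyzz'
          · exfalso
            have hy1 : y.1 = p.1 := by rw [hyp]
            rw [hy1, sub_self, zero_mul] at hysgn
            exact lt_irrefl 0 hysgn
          · exfalso
            have hygt : p.1 < y.1 := by rw [hyzz]; exact hzzx
            exact absurd hysgn (not_lt.mpr (le_of_lt (mul_pos (by linarith) (by linarith))))
          · exact hyzz'
      · refine ⟨zz, fun _ _ => ⟨⟨hzzC, hzz2, ?_⟩, ?_⟩⟩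
        · have hwlt : w.1 < p.1 := by rw [hwzz']; exact hzz'x
          exact mul_neg_of_pos_of_neg (by linarith) (by linarith)
        · intro y hyC hyon hysgn
          have hwlt : w.1 < p.1 := by rw [hwzz']; exact hzz'x
          rcases hcov y hyC hyon with hyp | hyzz | hyzz'
          · exfalso
            have hy1 : y.1 = p.1 := by rw [hyp]
            rw [hy1, sub_self, zero_mul] at hysgn
            exact lt_irrefl 0 hysgn
          · exact hyzz
          · exfalso
            have hylt : y.1 < p.1 := by rw [hyzz']; exact hzz'x
            exact absurd hysgn (not_lt.mpr (le_of_lt (mul_pos_of_neg_of_neg (by linarith) (by linarith))))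
    · exact ⟨w, fun h1 h2 => absurd ⟨h1, h2⟩ hw⟩
  -- the "partner" of w on the line through f and w
  have hexQ : ∀ w : ℝ × ℝ, ∃ w' : ℝ × ℝ, w ∈ C → w.1 ≠ p.1 →
      ((w' ∈ C ∧ w'.2 = lk f w * w'.1 + lc f w ∧ (w'.1 - p.1) * (w.1 - p.1) < 0) ∧
        (∀ y : ℝ × ℝ, y ∈ C → y.2 = lk f w * y.1 + lc f w →
          (y.1 - p.1) * (w.1 - p.1) < 0 → y = w')) := by
    intro w
    by_cases hw : w ∈ C ∧ w.1 ≠ p.1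
    · obtain ⟨hwC, hwx⟩ := hw
      have hfw : f.1 ≠ w.1 := by rw [hfx0]; exact Ne.symm hwx
      have hfonl : f.2 = lk f w * f.1 + lc f w := onL_lk₁ f w
      have hwonl : w.2 = lk f w * w.1 + lc f w := onL_lk₂ f w hfw
      have hpnot2 : ¬ (p.2 = lk f w * p.1 + lc f w) := by
        intro h
        apply hpnot
        rw [← hfx0, ← hfonl] at h
        rw [h, hfy0]
      have habsp2 : |p.2 - (lk f w * p.1 + lc f w)| = d := by
        have hrw : p.2 - (lk f w * p.1 + lc f w) = p.2 - (k₀ * p.1 + c₀) := by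
          have h1 : lk f w * p.1 + lc f w = f.2 := by rw [← hfx0, ← hfonl]
          rw [h1, hfy0]
        rw [hrw]
        exact habsp
      obtain ⟨hmidC, zz, zz', hzzC, hzz'C, hzz2, hzz'2, hzzgt, hzz'lt, hcov⟩ :=
        hstruct p (lk f w) (lc f w) hpC ⟨f, hfC, w, hwC, hfw, hfonl, hwonl⟩ hpnot2 habsp2
      clear hmin hOr hSS hS3 hno hstruct hcovL hnotL₂ hdet hdet₂ hexP
      have hmideq : (p.1, lk f w * p.1 + lc f w) = f := by
        refine Prod.ext hfx0.symm ?_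
        show lk f w * p.1 + lc f w = f.2
        rw [← hfx0, ← hfonl]
      rw [hmideq] at hcov
      rcases hcov w hwC hwonl with hwf | hwzz | hwzz'
      · exfalso
        apply hwx
        rw [hwf, hfx0]
      · refine ⟨zz', fun _ _ => ⟨⟨hzz'C, hzz'2, ?_⟩, ?_⟩⟩
        · have hwgt : p.1 < w.1 := by rw [hwzz]; exact hzzgt
          exact mul_neg_of_neg_of_pos (by linarith) (by linarith)
        · intro y hyC hyon hysgn
          have hwgt : p.1 < w.1 := by rw [hwzz]; exact hzzgt
          rcases hcov y hyC hyon with hyf | hyzz | hyzz'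
          · exfalso
            have hy1 : y.1 = p.1 := by rw [hyf, hfx0]
            rw [hy1, sub_self, zero_mul] at hysgn
            exact lt_irrefl 0 hysgn
          · exfalso
            have hygt : p.1 < y.1 := by rw [hyzz]; exact hzzgt
            exact absurd hysgn (not_lt.mpr (le_of_lt (mul_pos (by linarith) (by linarith))))
          · exact hyzz'
      · refine ⟨zz, fun _ _ => ⟨⟨hzzC, hzz2, ?_⟩, ?_⟩⟩
        · have hwlt : w.1 < p.1 := by rw [hwzz']; exact hzz'lt
          exact mul_neg_of_pos_of_neg (by linarith) (by linarith)
        · intro y hyC hyon hysgn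
          have hwlt : w.1 < p.1 := by rw [hwzz']; exact hzz'lt
          rcases hcov y hyC hyon with hyf | hyzz | hyzz'
          · exfalso
            have hy1 : y.1 = p.1 := by rw [hyf, hfx0]
            rw [hy1, sub_self, zero_mul] at hysgn
            exact lt_irrefl 0 hysgn
          · exact hyzz
          · exfalso
            have hylt : y.1 < p.1 := by rw [hyzz']; exact hzz'lt
            exact absurd hysgn (not_lt.mpr (le_of_lt (mul_pos_of_neg_of_neg (by linarith) (by linarith))))
    · exact ⟨w, fun h1 h2 => absurd ⟨h1, h2⟩ hw⟩
  choose P hP using hexP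
  choose Q hQ using hexQ
  -- P and Q are involutive
  have hPx : ∀ w : ℝ × ℝ, w ∈ C → w.1 ≠ p.1 → (P w).1 ≠ p.1 := by
    intro w hwC hwx h
    have hs := ((hP w hwC hwx).1).2.2
    rw [h, sub_self, zero_mul] at hs
    exact lt_irrefl 0 hs
  have hQx : ∀ w : ℝ × ℝ, w ∈ C → w.1 ≠ p.1 → (Q w).1 ≠ p.1 := by
    intro w hwC hwx h
    have hs := ((hQ w hwC hwx).1).2.2
    rw [h, sub_self, zero_mul] at hs
    exact lt_irrefl 0 hs
  have hPP : ∀ w : ℝ × ℝ, w ∈ C → w.1 ≠ p.1 → P (P w) = w := by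
    intro w hwC hwx
    obtain ⟨⟨hPC, hPon, hPsgn⟩, _⟩ := hP w hwC hwx
    have hPx1 : (P w).1 ≠ p.1 := hPx w hwC hwx
    obtain ⟨_, hP2uniq⟩ := hP (P w) hPC hPx1
    have hpPw : p.1 ≠ (P w).1 := Ne.symm hPx1
    have hkl := lk_unique p (P w) hpPw (lk p w) (lc p w) (onL_lk₁ p w) hPon
    refine (hP2uniq w hwC ?_ ?_).symm
    · rw [← hkl.1, ← hkl.2]
      exact onL_lk₂ p w (Ne.symm hwx)
    · rw [mul_comm]
      exact hPsgn
  have hQQ : ∀ w : ℝ × ℝ, w ∈ C → w.1 ≠ p.1 → Q (Q w) = w := by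
    intro w hwC hwx
    obtain ⟨⟨hQC, hQon, hQsgn⟩, _⟩ := hQ w hwC hwx
    have hQx1 : (Q w).1 ≠ p.1 := hQx w hwC hwx
    obtain ⟨_, hQ2uniq⟩ := hQ (Q w) hQC hQx1
    have hfQw : f.1 ≠ (Q w).1 := by rw [hfx0]; exact Ne.symm hQx1
    have hfw : f.1 ≠ w.1 := by rw [hfx0]; exact Ne.symm hwx
    have hkl := lk_unique f (Q w) hfQw (lk f w) (lc f w) (onL_lk₁ f w) hQon
    refine (hQ2uniq w hwC ?_ ?_).symm
    · rw [← hkl.1, ← hkl.2]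
      exact onL_lk₂ f w hfw
    · rw [mul_comm]
      exact hQsgn
  -- height class transitions
  have hH2 : ∀ w : ℝ × ℝ, w ∈ C → w.1 ≠ p.1 → (w.2 - (k₀ * w.1 + c₀)) * e₀ < e₀ ^ 2 →
      e₀ ^ 2 < ((P w).2 - (k₀ * (P w).1 + c₀)) * e₀ := by
    intro w hwC hwx hlt
    obtain ⟨⟨hPC, hPon, hPsgn⟩, _⟩ := hP w hwC hwx
    have hpw : p.1 ≠ w.1 := Ne.symm hwx
    have haff := h_affine k₀ c₀ p w (P w) hpw hPon
    rw [← he₀def] at haff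
    have hrneg : ((P w).1 - p.1) / (w.1 - p.1) < 0 := by
      rcases mul_neg_iff.mp hPsgn with ⟨h1, h2⟩ | ⟨h1, h2⟩
      · exact div_neg_of_pos_of_neg h1 h2
      · exact div_neg_of_neg_of_pos h1 h2
    have key : ((P w).2 - (k₀ * (P w).1 + c₀)) * e₀ - e₀ ^ 2
        = (((P w).1 - p.1) / (w.1 - p.1)) * ((w.2 - (k₀ * w.1 + c₀)) * e₀ - e₀ ^ 2) := by
      rw [haff]; ring
    have hpos := mul_pos_of_neg_of_neg hrneg
      (by linarith : (w.2 - (k₀ * w.1 + c₀)) * e₀ - e₀ ^ 2 < 0)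
    linarith [key, hpos]
  have hH3 : ∀ w : ℝ × ℝ, w ∈ C → w.1 ≠ p.1 → 0 < (w.2 - (k₀ * w.1 + c₀)) * e₀ →
      ((Q w).2 - (k₀ * (Q w).1 + c₀)) * e₀ < 0 := by
    intro w hwC hwx hpos
    obtain ⟨⟨hQC, hQon, hQsgn⟩, _⟩ := hQ w hwC hwx
    have hfw : f.1 ≠ w.1 := by rw [hfx0]; exact Ne.symm hwx
    have haff := h_affine k₀ c₀ f w (Q w) hfw hQon
    have hfe : f.2 - (k₀ * f.1 + c₀) = 0 := by rw [hfy0, hfx0]; ring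
    rw [hfe] at haff
    have hrneg : ((Q w).1 - f.1) / (w.1 - f.1) < 0 := by
      rw [hfx0]
      rcases mul_neg_iff.mp hQsgn with ⟨h1, h2⟩ | ⟨h1, h2⟩
      · exact div_neg_of_pos_of_neg h1 h2
      · exact div_neg_of_neg_of_pos h1 h2
    have key : ((Q w).2 - (k₀ * (Q w).1 + c₀)) * e₀
        = (((Q w).1 - f.1) / (w.1 - f.1)) * ((w.2 - (k₀ * w.1 + c₀)) * e₀) := by
      rw [haff]; ring
    have hneg := mul_neg_of_neg_of_pos hrneg hpos
    linarith [key, hneg]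
  -- the zig-zag walk
  obtain ⟨W, hW0, hWs⟩ : ∃ W : ℕ → ℝ × ℝ, W 0 = z ∧
      ∀ n, W (n + 1) = if Even n then P (W n) else Q (W n) :=
    ⟨fun n => Nat.rec z (fun m prev => if Even m then P prev else Q prev) n, rfl, fun _ => rfl⟩
  have hzM : (z.2 - (k₀ * z.1 + c₀)) * e₀ = 0 := by rw [hz2]; ring
  have hInv : ∀ n, W n ∈ C ∧ (W n).1 ≠ p.1 ∧
      ((n = 0 ∧ ((W n).2 - (k₀ * (W n).1 + c₀)) * e₀ = 0) ∨
       (¬ Even n ∧ e₀ ^ 2 < ((W n).2 - (k₀ * (W n).1 + c₀)) * e₀) ∨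
       (n ≠ 0 ∧ Even n ∧ ((W n).2 - (k₀ * (W n).1 + c₀)) * e₀ < 0)) := by
    intro n
    induction n with
    | zero =>
      exact ⟨by rw [hW0]; exact hzC, by rw [hW0]; exact hzx,
        Or.inl ⟨rfl, by rw [hW0]; exact hzM⟩⟩
    | succ m ih =>
      obtain ⟨hC, hx, hcl⟩ := ih
      by_cases hm : Even m
      · have hstep : W (m + 1) = P (W m) := by rw [hWs m, if_pos hm]
        have hlt : ((W m).2 - (k₀ * (W m).1 + c₀)) * e₀ < e₀ ^ 2 := by
          rcases hcl with ⟨_, h0⟩ | ⟨ho, _⟩ | ⟨_, _, hneg⟩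
          · rw [h0]; exact hsq
          · exact absurd hm ho
          · linarith
        have hgt2 := hH2 (W m) hC hx hlt
        have hPC := ((hP (W m) hC hx).1).1
        exact ⟨by rw [hstep]; exact hPC, by rw [hstep]; exact hPx (W m) hC hx,
          Or.inr (Or.inl ⟨by simp [Nat.even_add_one, hm], by rw [hstep]; exact hgt2⟩)⟩
      · have hstep : W (m + 1) = Q (W m) := by rw [hWs m, if_neg hm]
        have hpos : 0 < ((W m).2 - (k₀ * (W m).1 + c₀)) * e₀ := by
          rcases hcl with ⟨h0, _⟩ | ⟨_, h⟩ | ⟨_, he', _⟩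
          · exact absurd (h0 ▸ Even.zero) hm
          · linarith
          · exact absurd he' hm
        have hlt3 := hH3 (W m) hC hx hpos
        have hQC := ((hQ (W m) hC hx).1).1
        exact ⟨by rw [hstep]; exact hQC, by rw [hstep]; exact hQx (W m) hC hx,
          Or.inr (Or.inr ⟨Nat.succ_ne_zero _, Nat.even_add_one.mpr hm,
            by rw [hstep]; exact hlt3⟩)⟩
  have hModd : ∀ n, ¬ Even n → e₀ ^ 2 < ((W n).2 - (k₀ * (W n).1 + c₀)) * e₀ := by
    intro n hn
    rcases (hInv n).2.2 with ⟨h0, _⟩ | ⟨_, h⟩ | ⟨_, he', _⟩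
    · exact absurd (h0 ▸ Even.zero) hn
    · exact h
    · exact absurd he' hn
  have hMev : ∀ n, Even n → n ≠ 0 → ((W n).2 - (k₀ * (W n).1 + c₀)) * e₀ < 0 := by
    intro n hn h0
    rcases (hInv n).2.2 with ⟨h0', _⟩ | ⟨ho, _⟩ | ⟨_, _, h⟩
    · exact absurd h0' h0
    · exact absurd hn ho
    · exact h
  have hM0 : ((W 0).2 - (k₀ * (W 0).1 + c₀)) * e₀ = 0 := by rw [hW0]; exact hzM
  have hInj : ∀ i j, i < j → W i ≠ W j := by
    intro i
    induction i with
    | zero =>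
      intro j hj heq
      by_cases hEj : Even j
      · have h1 := hMev j hEj (by omega)
        rw [← heq, hM0] at h1
        exact lt_irrefl 0 h1
      · have h1 := hModd j hEj
        rw [← heq, hM0] at h1
        linarith
    | succ i ih =>
      intro j hj heq
      obtain ⟨jj, rfl⟩ : ∃ jj, j = jj + 1 := ⟨j - 1, by omega⟩
      by_cases hEi : Even i
      · by_cases hEj : Even jj
        · have h1 : W (i + 1) = P (W i) := by rw [hWs i, if_pos hEi]
          have h2 : W (jj + 1) = P (W jj) := by rw [hWs jj, if_pos hEj]
          have heq' : P (W i) = P (W jj) := by rw [← h1, ← h2, heq]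
          have hi' := hInv i
          have hj' := hInv jj
          have hww : W i = W jj := by
            have e1 := hPP (W i) hi'.1 hi'.2.1
            have e2 := hPP (W jj) hj'.1 hj'.2.1
            rw [← e1, heq', e2]
          exact ih jj (by omega) hww
        · have ha := hModd (i + 1) (by simp [Nat.even_add_one, hEi])
          have hb := hMev (jj + 1) (Nat.even_add_one.mpr hEj) (Nat.succ_ne_zero _)
          rw [heq] at ha
          linarith
      · by_cases hEj : Even jj
        · have ha := hMev (i + 1) (Nat.even_add_one.mpr hEi) (Nat.succ_ne_zero _)
          have hb := hModd (jj + 1) (by simp [Nat.even_add_one, hEj])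
          rw [heq] at ha
          linarith
        · have h1 : W (i + 1) = Q (W i) := by rw [hWs i, if_neg hEi]
          have h2 : W (jj + 1) = Q (W jj) := by rw [hWs jj, if_neg hEj]
          have heq' : Q (W i) = Q (W jj) := by rw [← h1, ← h2, heq]
          have hi' := hInv i
          have hj' := hInv jj
          have hww : W i = W jj := by
            have e1 := hQQ (W i) hi'.1 hi'.2.1
            have e2 := hQQ (W jj) hj'.1 hj'.2.1
            rw [← e1, heq', e2]
          exact ih jj (by omega) hww
  obtain ⟨i, hi, j, hj, hij, heq⟩ :=
    Finset.exists_ne_map_eq_of_card_lt_of_maps_to (s := Finset.range (C.card + 1)) (t := C)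
      (by simp) (fun n _ => (hInv n).1)
  rcases lt_or_gt_of_ne hij with h | h
  · exact hInj i j h heq
  · exact hInj j i h heq.symm




lemma pair_smul_vadd (r : ℝ) (u v : ℝ × ℝ) :
    r • (u - v) +ᵥ v = (r * (u.1 - v.1) + v.1, r * (u.2 - v.2) + v.2) := by
  simp [Prod.ext_iff, Prod.smul_fst, Prod.smul_snd]

lemma collinear_of_det3 (s : Set (ℝ × ℝ)) (b₁ b₂ : ℝ × ℝ) (hb₁ : b₁ ∈ s)
    (hne : b₁ ≠ b₂) (h : ∀ x ∈ s, det3 b₁ b₂ x = 0) : Collinear ℝ s := by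
  rw [collinear_iff_of_mem hb₁]
  refine ⟨b₂ - b₁, fun p hp => ?_⟩
  have hd := h p hp
  simp only [det3] at hd
  by_cases h1 : b₂.1 - b₁.1 = 0
  · have h2 : b₂.2 - b₁.2 ≠ 0 := by
      intro h2
      exact hne (Prod.ext (by linarith) (by linarith))
    refine ⟨(p.2 - b₁.2) / (b₂.2 - b₁.2), ?_⟩
    rw [pair_smul_vadd]
    have hp1 : p.1 - b₁.1 = 0 := by
      rw [h1] at hd
      rcases mul_eq_zero.mp (by linarith : (b₂.2 - b₁.2) * (p.1 - b₁.1) = 0) with h' | h'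
      · exact absurd h' h2
      · exact h'
    refine Prod.ext ?_ ?_
    · simp only []
      rw [h1]
      simp
      linarith
    · simp only []
      field_simp
      ring
  · refine ⟨(p.1 - b₁.1) / (b₂.1 - b₁.1), ?_⟩
    rw [pair_smul_vadd]
    refine Prod.ext ?_ ?_
    · simp only []
      field_simp
      ring
    · simp only []
      field_simp
      nlinarith [hd]

lemma exists_pair_of_not_collinear (s : Finset (ℝ × ℝ)) (h : ¬ Collinear ℝ (↑s : Set (ℝ × ℝ))) :
    ∃ b₁ ∈ s, ∃ b₂ ∈ s, b₁ ≠ b₂ := by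
  by_contra hc
  push_neg at hc
  apply h
  rcases s.eq_empty_or_nonempty with rfl | ⟨b, hb⟩
  · simpa using collinear_empty ℝ (ℝ × ℝ)
  · refine (collinear_singleton ℝ b).subset ?_
    intro x hx
    simp only [Set.mem_singleton_iff]
    exact hc x (by exact_mod_cast hx) b hb

lemma det3_of_mem_pair (b₁ b₂ x : ℝ × ℝ)
    (hx : x ∈ affineSpan ℝ ({b₁, b₂} : Set (ℝ × ℝ))) : det3 b₁ b₂ x = 0 := by
  have hx' : (x - b₁) +ᵥ b₁ ∈ line[ℝ, b₁, b₂] := by simpa using hx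
  rw [vadd_left_mem_affineSpan_pair] at hx'
  obtain ⟨r, hr⟩ := hx'
  have hx1 : x.1 - b₁.1 = r * (b₂.1 - b₁.1) := by
    have := congrArg Prod.fst hr
    simpa [Prod.smul_fst, mul_comm] using this.symm
  have hx2 : x.2 - b₁.2 = r * (b₂.2 - b₁.2) := by
    have := congrArg Prod.snd hr
    simpa [Prod.smul_snd, mul_comm] using this.symm
  simp only [det3]
  rw [hx1, hx2]
  ring




def Yf (a : ℝ × ℝ) (l : ℝ) (q : ℝ × ℝ) : ℝ := (q.2 - a.2) - l * (q.1 - a.1)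

noncomputable def Tf (a : ℝ × ℝ) (l : ℝ) (q : ℝ × ℝ) : ℝ × ℝ :=
  ((q.1 - a.1) / Yf a l q, 1 / Yf a l q)

lemma Tf_inj (a : ℝ × ℝ) (l : ℝ) (q q' : ℝ × ℝ) (h : Yf a l q ≠ 0) (h' : Yf a l q' ≠ 0)
    (heq : Tf a l q = Tf a l q') : q = q' := by
  simp only [Tf, Prod.mk.injEq] at heq
  obtain ⟨e1, e2⟩ := heq
  rw [div_eq_div_iff h h'] at e2
  simp only [one_mul] at e2
  rw [div_eq_div_iff h h'] at e1
  have hx : q.1 = q'.1 := by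
    rw [e2] at e1
    have := mul_right_cancel₀ h e1
    linarith
  have hy : q.2 = q'.2 := by
    simp only [Yf] at e2
    rw [hx] at e2
    linarith
  exact Prod.ext hx hy

lemma det3_Tf (a : ℝ × ℝ) (l : ℝ) (q₁ q₂ q₃ : ℝ × ℝ) (h₁ : Yf a l q₁ ≠ 0)
    (h₂ : Yf a l q₂ ≠ 0) (h₃ : Yf a l q₃ ≠ 0) :
    det3 (Tf a l q₁) (Tf a l q₂) (Tf a l q₃) * (Yf a l q₁ * Yf a l q₂ * Yf a l q₃)
      = - det3 q₁ q₂ q₃ := by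
  simp only [det3, Tf]
  field_simp
  simp only [Yf]
  ring

lemma det3_Tf_iff (a : ℝ × ℝ) (l : ℝ) (q₁ q₂ q₃ : ℝ × ℝ) (h₁ : Yf a l q₁ ≠ 0)
    (h₂ : Yf a l q₂ ≠ 0) (h₃ : Yf a l q₃ ≠ 0) :
    det3 (Tf a l q₁) (Tf a l q₂) (Tf a l q₃) = 0 ↔ det3 q₁ q₂ q₃ = 0 := by
  have key := det3_Tf a l q₁ q₂ q₃ h₁ h₂ h₃
  constructor
  · intro h
    rw [h, zero_mul] at key
    linarith
  · intro h
    rw [h] at key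
    have hY : Yf a l q₁ * Yf a l q₂ * Yf a l q₃ ≠ 0 := by
      exact mul_ne_zero (mul_ne_zero h₁ h₂) h₃
    have := mul_eq_zero.mp (by linarith : det3 (Tf a l q₁) (Tf a l q₂) (Tf a l q₃) *
      (Yf a l q₁ * Yf a l q₂ * Yf a l q₃) = 0)
    tauto

lemma det3_through_a (a : ℝ × ℝ) (l : ℝ) (b₁ b₂ : ℝ × ℝ) :
    (b₁.1 - a.1) * Yf a l b₂ - (b₂.1 - a.1) * Yf a l b₁ = det3 b₁ b₂ a := by
  simp only [Yf, det3]
  ring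

lemma Tf_fst_eq (a : ℝ × ℝ) (l : ℝ) (b₁ b₂ : ℝ × ℝ) (h₁ : Yf a l b₁ ≠ 0)
    (h₂ : Yf a l b₂ ≠ 0) (hdet : det3 b₁ b₂ a = 0) : (Tf a l b₁).1 = (Tf a l b₂).1 := by
  simp only [Tf]
  rw [div_eq_div_iff h₁ h₂]
  have := det3_through_a a l b₁ b₂
  rw [hdet] at this
  linarith


end SG17

/-- sharp Sylvester–Gallai variant: if `A` is a finite set of at least 3
points in the real plane, `a ∈ A`, and the points of `A ∖ {a}` are not all collinear,
then there is an affine line avoiding `a` that contains exactly two points of `A`. -/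
theorem exists_ordinary_line_avoiding_point (A : Finset (ℝ × ℝ)) (a : ℝ × ℝ)
    (hcard : 3 ≤ A.card) (ha : a ∈ A)
    (hline : ¬ Collinear ℝ (↑(A.erase a) : Set (ℝ × ℝ))) :
    ∃ L : AffineSubspace ℝ (ℝ × ℝ), Module.finrank ℝ L.direction = 1 ∧
      a ∉ L ∧ (A.filter fun p => p ∈ L).card = 2 := by
  obtain ⟨l, hYb⟩ : ∃ l : ℝ, ∀ b ∈ A.erase a, SG17.Yf a l b ≠ 0 := by
    obtain ⟨l, hl⟩ := Infinite.exists_notMem_finset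
      ((A.erase a).image (fun b => (b.2 - a.2) / (b.1 - a.1)))
    refine ⟨l, fun b hb h0 => ?_⟩
    simp only [SG17.Yf] at h0
    by_cases hx : b.1 - a.1 = 0
    · rw [hx, mul_zero] at h0
      exact Finset.ne_of_mem_erase hb (Prod.ext (by linarith) (by linarith))
    · apply hl
      refine Finset.mem_image.mpr ⟨b, hb, ?_⟩
      rw [div_eq_iff hx]
      linarith
  obtain ⟨b₀, hb₀, b₀', hb₀', hbne⟩ := SG17.exists_pair_of_not_collinear (A.erase a) hline
  have h3C : ∃ u ∈ (A.erase a).image (SG17.Tf a l), ∃ v ∈ (A.erase a).image (SG17.Tf a l),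
      ∃ w ∈ (A.erase a).image (SG17.Tf a l), SG17.det3 u v w ≠ 0 := by
    by_contra hall
    push_neg at hall
    apply hline
    refine SG17.collinear_of_det3 _ b₀ b₀' (Finset.mem_coe.mpr hb₀) hbne ?_
    intro x hx
    have hx' : x ∈ A.erase a := Finset.mem_coe.mp hx
    have h0 := hall (SG17.Tf a l b₀) (Finset.mem_image.mpr ⟨b₀, hb₀, rfl⟩)
      (SG17.Tf a l b₀') (Finset.mem_image.mpr ⟨b₀', hb₀', rfl⟩)
      (SG17.Tf a l x) (Finset.mem_image.mpr ⟨x, hx', rfl⟩)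
    exact (SG17.det3_Tf_iff a l b₀ b₀' x (hYb _ hb₀) (hYb _ hb₀') (hYb _ hx')).mp h0
  obtain ⟨k, c, hcard2⟩ := SG17.core ((A.erase a).image (SG17.Tf a l)) h3C
  obtain ⟨q₁, q₂, hq12, hfilt⟩ := Finset.card_eq_two.mp hcard2
  have hq₁mem : q₁ ∈ ((A.erase a).image (SG17.Tf a l)).filter (fun p => p.2 = k * p.1 + c) := by
    rw [hfilt]; simp
  have hq₂mem : q₂ ∈ ((A.erase a).image (SG17.Tf a l)).filter (fun p => p.2 = k * p.1 + c) := by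
    rw [hfilt]; simp
  obtain ⟨hq₁C, hq₁on⟩ := Finset.mem_filter.mp hq₁mem
  obtain ⟨hq₂C, hq₂on⟩ := Finset.mem_filter.mp hq₂mem
  obtain ⟨b₁, hb₁B, hTb₁⟩ := Finset.mem_image.mp hq₁C
  obtain ⟨b₂, hb₂B, hTb₂⟩ := Finset.mem_image.mp hq₂C
  have hb₁A : b₁ ∈ A := Finset.mem_of_mem_erase hb₁B
  have hb₂A : b₂ ∈ A := Finset.mem_of_mem_erase hb₂B
  have hb12 : b₁ ≠ b₂ := by
    rintro rfl
    exact hq12 (hTb₁.symm.trans hTb₂)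
  have habs12 : q₁.1 ≠ q₂.1 := by
    intro h
    apply hq12
    exact Prod.ext h (by rw [hq₁on, hq₂on, h])
  have hanotL : a ∉ affineSpan ℝ ({b₁, b₂} : Set (ℝ × ℝ)) := by
    intro haL
    have hdet := SG17.det3_of_mem_pair b₁ b₂ a haL
    have hfst := SG17.Tf_fst_eq a l b₁ b₂ (hYb _ hb₁B) (hYb _ hb₂B) hdet
    rw [hTb₁, hTb₂] at hfst
    exact habs12 hfst
  have hfeq : A.filter (fun p => p ∈ affineSpan ℝ ({b₁, b₂} : Set (ℝ × ℝ))) = {b₁, b₂} := by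
    apply Finset.ext
    intro x
    simp only [Finset.mem_filter, Finset.mem_insert, Finset.mem_singleton]
    constructor
    · rintro ⟨hxA, hxL⟩
      have hdx := SG17.det3_of_mem_pair b₁ b₂ x hxL
      have hxa : x ≠ a := by rintro rfl; exact hanotL hxL
      have hxB : x ∈ A.erase a := Finset.mem_erase.mpr ⟨hxa, hxA⟩
      have hdT : SG17.det3 q₁ q₂ (SG17.Tf a l x) = 0 := by
        rw [← hTb₁, ← hTb₂]
        exact (SG17.det3_Tf_iff a l b₁ b₂ x (hYb _ hb₁B) (hYb _ hb₂B) (hYb _ hxB)).mpr hdx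
      obtain ⟨hk, hc⟩ := SG17.lk_unique q₁ q₂ habs12 k c hq₁on hq₂on
      have h1 := SG17.det3_onL q₁ q₂ (SG17.Tf a l x) habs12
      rw [hdT] at h1
      have hfac : (SG17.Tf a l x).2 - (SG17.lk q₁ q₂ * (SG17.Tf a l x).1 + SG17.lc q₁ q₂) = 0 := by
        rcases mul_eq_zero.mp h1.symm with h' | h'
        · exact absurd (by linarith : q₁.1 = q₂.1) habs12
        · exact h'
      have honx : (SG17.Tf a l x).2 = k * (SG17.Tf a l x).1 + c := by
        rw [hk, hc]
        linarith
      have hTxmem : SG17.Tf a l x ∈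
          ((A.erase a).image (SG17.Tf a l)).filter (fun p => p.2 = k * p.1 + c) :=
        Finset.mem_filter.mpr ⟨Finset.mem_image.mpr ⟨x, hxB, rfl⟩, honx⟩
      rw [hfilt] at hTxmem
      rcases Finset.mem_insert.mp hTxmem with h' | h'
      · exact Or.inl (SG17.Tf_inj a l x b₁ (hYb _ hxB) (hYb _ hb₁B) (by rw [h', ← hTb₁]))
      · have h'' := Finset.mem_singleton.mp h'
        exact Or.inr (SG17.Tf_inj a l x b₂ (hYb _ hxB) (hYb _ hb₂B) (by rw [h'', ← hTb₂]))
    · rintro (rfl | rfl)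
      · exact ⟨hb₁A, left_mem_affineSpan_pair ℝ _ _⟩
      · exact ⟨hb₂A, right_mem_affineSpan_pair ℝ _ _⟩
  refine ⟨affineSpan ℝ {b₁, b₂}, ?_, hanotL, ?_⟩
  · rw [direction_affineSpan, vectorSpan_pair]
    exact finrank_span_singleton (vsub_ne_zero.mpr hb12)
  · rw [hfeq]
    exact Finset.card_pair hb12
end
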